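/- arXiv:1904.07498 — 4 statements merged into one kernel-verified Lean document; each statement's English description precedes it below -/
import Mathlib

section
/- Let A ⊂ ℝ^d be a measurable set of finite measure such that the set of k-tuples (p_1,...,p_k) ∈ A^k with ‖p_i − p_j‖ > 2 for all i < j has λ_{kd}-measure zero. Then (1/2)·λ_{2d}({(p,q) ∈ A×A : ‖p−q‖ > 2}) ≤ (1/2)·(1 − 1/(k−1))·λ_d(A)^2. -/
open MeasureTheory ENNReal Finset

lemma turan_pair_count {N r : ℕ} (hr : 0 < r) :
    r * #(Finset.univ.filter fun q : Fin N × Fin N =>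
      (SimpleGraph.turanGraph N r).Adj q.1 q.2) ≤ (r - 1) * N ^ 2 := by
  classical
  set f : Fin N → ℕ := fun x => (x : ℕ) % r with hf
  set m : ℕ → ℕ := fun c => #(Finset.univ.filter fun x : Fin N => f x = c) with hm
  have hmem : ∀ x : Fin N, f x ∈ Finset.range r := fun x =>
    Finset.mem_range.2 (Nat.mod_lt _ hr)
  have hsum : ∑ c ∈ Finset.range r, m c = N := by
    rw [hm, ← Finset.card_eq_sum_card_fiberwise (fun x _ => hmem x)]
    simp
  have hdiag : #(Finset.univ.filter fun q : Fin N × Fin N => f q.1 = f q.2)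
      = ∑ c ∈ Finset.range r, m c ^ 2 := by
    rw [Finset.card_eq_sum_card_fiberwise
      (f := fun q : Fin N × Fin N => f q.1) (t := Finset.range r)
      (fun q _ => hmem q.1)]
    refine Finset.sum_congr rfl fun c _ => ?_
    rw [Finset.filter_filter]
    have h1 : (Finset.univ.filter fun q : Fin N × Fin N => f q.1 = f q.2 ∧ f q.1 = c)
        = Finset.univ.filter (fun q : Fin N × Fin N => f q.1 = c ∧ f q.2 = c) := by
      apply Finset.filter_congr
      intro q _
      constructor
      · rintro ⟨h1, h2⟩; exact ⟨h2, h1 ▸ h2⟩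
      · rintro ⟨h1, h2⟩; exact ⟨h1.trans h2.symm, h1⟩
    have h2 : (Finset.univ.filter fun q : Fin N × Fin N => f q.1 = c ∧ f q.2 = c)
        = (Finset.univ.filter fun x : Fin N => f x = c) ×ˢ
          (Finset.univ.filter fun x : Fin N => f x = c) := by
      ext ⟨a, b⟩
      simp [Finset.mem_product]
    rw [h1, h2, Finset.card_product, sq]
  have hcompl : #(Finset.univ.filter fun q : Fin N × Fin N => ¬ f q.1 = f q.2)
      + ∑ c ∈ Finset.range r, m c ^ 2 = N ^ 2 := by
    rw [← hdiag]
    have := Finset.card_filter_add_card_filter_not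
      (s := (Finset.univ : Finset (Fin N × Fin N)))
      (p := fun q => f q.1 = f q.2)
    simp only [Finset.card_univ, Fintype.card_prod, Fintype.card_fin] at this
    rw [sq]
    omega
  have hAdj : (Finset.univ.filter fun q : Fin N × Fin N =>
      (SimpleGraph.turanGraph N r).Adj q.1 q.2)
      = Finset.univ.filter fun q : Fin N × Fin N => ¬ f q.1 = f q.2 := by
    apply Finset.filter_congr
    intro q _
    simp [SimpleGraph.turanGraph, hf]
  have hCS : (N : ℤ) ^ 2 ≤ r * ∑ c ∈ Finset.range r, (m c : ℤ) ^ 2 := by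
    have := sq_sum_le_card_mul_sum_sq (s := Finset.range r)
      (f := fun c => (m c : ℤ))
    rw [← Nat.cast_sum, hsum] at this
    simpa using this
  have hCS' : N ^ 2 ≤ r * ∑ c ∈ Finset.range r, m c ^ 2 := by exact_mod_cast hCS
  rw [hAdj]
  have hr1 : 1 ≤ r := hr
  zify [hr1]
  have e1 := hcompl
  zify at e1 hCS'
  nlinarith [e1, hCS']


lemma meas_allA {ι β : Type*} [Countable ι] [MeasurableSpace β] {A : Set β}
    (hA : MeasurableSet A) : MeasurableSet {y : ι → β | ∀ m, y m ∈ A} := by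
  have h : {y : ι → β | ∀ m, y m ∈ A} = Set.pi Set.univ (fun _ => A) := by
    ext y; simp [Set.mem_pi]
  rw [h]; exact MeasurableSet.univ_pi fun _ => hA

variable {d : ℕ}

local notation "E" => EuclideanSpace ℝ (Fin d)

lemma meas_pairSet {A : Set E} (hA : MeasurableSet A) :
    MeasurableSet {p : E × E | p.1 ∈ A ∧ p.2 ∈ A ∧ 2 < dist p.1 p.2} := by
  have h : {p : E × E | p.1 ∈ A ∧ p.2 ∈ A ∧ 2 < dist p.1 p.2}
      = (A ×ˢ A) ∩ {p : E × E | 2 < dist p.1 p.2} := by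
    ext p; simp only [Set.mem_inter_iff, Set.mem_prod, Set.mem_setOf_eq]; tauto
  rw [h]
  exact (hA.prod hA).inter
    ((isOpen_lt continuous_const (continuous_fst.dist continuous_snd)).measurableSet)

lemma meas_far {ι : Type*} (a b : ι) :
    MeasurableSet {y : ι → E | 2 < dist (y a) (y b)} :=
  measurableSet_lt measurable_const ((measurable_pi_apply a).dist (measurable_pi_apply b))

lemma marg_pair {A : Set E} (hA : MeasurableSet A) {N : ℕ} {i j : Fin N} (hij : i ≠ j) :
    volume {x : Fin N → E | (∀ m, x m ∈ A) ∧ 2 < dist (x i) (x j)}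
      = volume {p : E × E | p.1 ∈ A ∧ p.2 ∈ A ∧ 2 < dist p.1 p.2} * volume A ^ (N - 2) := by
  classical
  set p : Fin N → Prop := fun m => m = i ∨ m = j with hp
  have hji : ¬ (j = i) := fun h => hij h.symm
  let φ : Fin 2 ≃ {m // p m} :=
    { toFun := ![⟨i, Or.inl rfl⟩, ⟨j, Or.inr rfl⟩]
      invFun := fun m => if m.1 = i then 0 else 1
      left_inv := by
        intro t
        fin_cases t <;> simp [hji]
      right_inv := by
        rintro ⟨m, rfl | rfl⟩ <;> simp [hji] }
  set S₁ : Set ({m // p m} → E) :=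
    {y | (∀ m, y m ∈ A) ∧ 2 < dist (y (φ 0)) (y (φ 1))} with hS₁
  set S₂ : Set ({m // ¬ p m} → E) := Set.pi Set.univ (fun _ => A) with hS₂
  have hmeas₁ : MeasurableSet S₁ :=
    (meas_allA hA).inter (meas_far (φ 0) (φ 1))
  have hmeas₂ : MeasurableSet S₂ := MeasurableSet.univ_pi fun _ => hA
  have hpre : {x : Fin N → E | (∀ m, x m ∈ A) ∧ 2 < dist (x i) (x j)}
      = (MeasurableEquiv.piEquivPiSubtypeProd (fun _ : Fin N => E) p) ⁻¹' (S₁ ×ˢ S₂) := by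
    ext x
    constructor
    · rintro ⟨h1, h2⟩
      exact ⟨⟨fun m => h1 m, h2⟩, fun m _ => h1 m⟩
    · rintro ⟨⟨h1, h2⟩, h3⟩
      refine ⟨fun m => ?_, h2⟩
      by_cases hm : p m
      · exact h1 ⟨m, hm⟩
      · exact h3 ⟨m, hm⟩ (Set.mem_univ _)
  have hmp := MeasureTheory.measurePreserving_piEquivPiSubtypeProd
    (fun _ : Fin N => (volume : Measure E)) p
  rw [MeasureTheory.volume_pi, hpre,
    hmp.measure_preimage (hmeas₁.prod hmeas₂).nullMeasurableSet,
    Measure.prod_prod]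
  have hcard2 : Fintype.card {m // p m} = 2 := by
    rw [Fintype.card_subtype]
    have : Finset.univ.filter p = {i, j} := by
      ext m; simp [hp]
    rw [this, Finset.card_insert_of_notMem (by simp [hij]), Finset.card_singleton]
  congr 1
  · -- first factor equals the pair volume
    have h2 := MeasureTheory.measurePreserving_piCongrLeft
      (fun _ : {m // p m} => (volume : Measure E)) φ
    rw [← h2.measure_preimage hmeas₁.nullMeasurableSet]
    have hpre2 : (MeasurableEquiv.piCongrLeft (fun _ : {m // p m} => E) φ) ⁻¹' S₁
        = (MeasurableEquiv.piFinTwo (fun _ : Fin 2 => E)) ⁻¹'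
          {q : E × E | q.1 ∈ A ∧ q.2 ∈ A ∧ 2 < dist q.1 q.2} := by
      ext q
      have happ : ∀ t : Fin 2,
          (MeasurableEquiv.piCongrLeft (fun _ : {m // p m} => E) φ) q (φ t) = q t :=
        fun t => MeasurableEquiv.piCongrLeft_apply_apply (β := fun _ : {m // p m} => E) φ q t
      simp only [Set.mem_preimage, hS₁, Set.mem_setOf_eq]
      constructor
      · rintro ⟨h1, h2'⟩
        rw [happ 0, happ 1] at h2'
        refine ⟨?_, ?_, h2'⟩
        · have := h1 (φ 0); rwa [happ 0] at this
        · have := h1 (φ 1); rwa [happ 1] at this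
      · rintro ⟨h1, h2', h3⟩
        refine ⟨fun m => ?_, by rw [happ 0, happ 1]; exact h3⟩
        obtain ⟨t, rfl⟩ := φ.surjective m
        rw [happ t]
        fin_cases t
        · exact h1
        · exact h2'
    rw [hpre2,
      (MeasureTheory.measurePreserving_piFinTwo
        (fun _ : Fin 2 => (volume : Measure E))).measure_preimage
        (meas_pairSet hA).nullMeasurableSet]
    rw [← Measure.volume_eq_prod]
  · -- second factor equals (volume A) ^ (N - 2)
    rw [hS₂, Measure.pi_pi]
    rw [Finset.prod_const, Finset.card_univ]
    congr 1
    have := Fintype.card_subtype_compl (p := p)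
    rw [this, hcard2, Fintype.card_fin]

lemma marg_clique {A : Set E} (hA : MeasurableSet A) {k N : ℕ} (σ : Fin k → Fin N)
    (hσ : Function.Injective σ)
    (hfree : volume {q : Fin k → E |
      (∀ i, q i ∈ A) ∧ ∀ i j, i < j → 2 < dist (q i) (q j)} = 0) :
    volume {x : Fin N → E |
      (∀ t, x (σ t) ∈ A) ∧ ∀ t s, t < s → 2 < dist (x (σ t)) (x (σ s))} = 0 := by
  classical
  set p : Fin N → Prop := fun m => ∃ t, σ t = m with hp
  let φ : Fin k ≃ {m // p m} := Equiv.ofBijective (fun t => ⟨σ t, ⟨t, rfl⟩⟩)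
    ⟨fun a b hab => hσ (by simpa [Subtype.ext_iff] using hab),
     by rintro ⟨m, t, rfl⟩; exact ⟨t, rfl⟩⟩
  set S₁ : Set ({m // p m} → E) :=
    {y | (∀ t, y (φ t) ∈ A) ∧ ∀ t s, t < s → 2 < dist (y (φ t)) (y (φ s))} with hS₁
  have hmeas₁ : MeasurableSet S₁ := by
    have e₁ : S₁ = (⋂ t, (fun y : {m // p m} → E => y (φ t)) ⁻¹' A) ∩
        ⋂ t, ⋂ s, ⋂ (_ : t < s), {y : {m // p m} → E | 2 < dist (y (φ t)) (y (φ s))} := by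
      ext y
      simp only [hS₁, Set.mem_setOf_eq, Set.mem_inter_iff, Set.mem_iInter, Set.mem_preimage]
    rw [e₁]
    apply MeasurableSet.inter
    · exact MeasurableSet.iInter fun t => (measurable_pi_apply (φ t)) hA
    · apply MeasurableSet.iInter
      intro t
      apply MeasurableSet.iInter
      intro s
      apply MeasurableSet.iInter
      intro _
      exact meas_far (φ t) (φ s)
  have hpre : {x : Fin N → E |
      (∀ t, x (σ t) ∈ A) ∧ ∀ t s, t < s → 2 < dist (x (σ t)) (x (σ s))}
      = (MeasurableEquiv.piEquivPiSubtypeProd (fun _ : Fin N => E) p) ⁻¹'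
        (S₁ ×ˢ (Set.univ : Set ({m // ¬ p m} → E))) := by
    ext x
    constructor
    · rintro ⟨h1, h2⟩
      exact ⟨⟨h1, h2⟩, Set.mem_univ _⟩
    · rintro ⟨⟨h1, h2⟩, -⟩
      exact ⟨h1, h2⟩
  have hmp := MeasureTheory.measurePreserving_piEquivPiSubtypeProd
    (fun _ : Fin N => (volume : Measure E)) p
  rw [MeasureTheory.volume_pi, hpre,
    hmp.measure_preimage (hmeas₁.prod MeasurableSet.univ).nullMeasurableSet,
    Measure.prod_prod]
  have hzero : (Measure.pi fun _ : {m // p m} => (volume : Measure E)) S₁ = 0 := by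
    have h2 := MeasureTheory.measurePreserving_piCongrLeft
      (fun _ : {m // p m} => (volume : Measure E)) φ
    rw [← h2.measure_preimage hmeas₁.nullMeasurableSet]
    have hpre2 : (MeasurableEquiv.piCongrLeft (fun _ : {m // p m} => E) φ) ⁻¹' S₁
        = {q : Fin k → E | (∀ i, q i ∈ A) ∧ ∀ i j, i < j → 2 < dist (q i) (q j)} := by
      ext q
      have happ : ∀ t : Fin k,
          (MeasurableEquiv.piCongrLeft (fun _ : {m // p m} => E) φ) q (φ t) = q t :=
        fun t => MeasurableEquiv.piCongrLeft_apply_apply (β := fun _ : {m // p m} => E) φ q t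
      simp only [Set.mem_preimage, hS₁, Set.mem_setOf_eq, happ]
    rw [hpre2, ← MeasureTheory.volume_pi, hfree]
  rw [hzero, zero_mul]

lemma fin_turan {N r : ℕ} (hr : 0 < r) (G : SimpleGraph (Fin N)) [DecidableRel G.Adj]
    (h : G.CliqueFree (r + 1)) :
    r * #(Finset.univ.filter fun q : Fin N × Fin N => G.Adj q.1 q.2) ≤ (r - 1) * N ^ 2 := by
  classical
  have ebridge : (Finset.univ.filter fun q : Fin N × Fin N => G.Adj q.1 q.2)
      = (Finset.univ.filter fun (x, y) => G.Adj x y) :=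
    Finset.filter_congr (by rintro ⟨a, b⟩ _; exact Iff.rfl)
  have ebridgeT : (Finset.univ.filter fun q : Fin N × Fin N =>
        (SimpleGraph.turanGraph N r).Adj q.1 q.2)
      = (Finset.univ.filter fun (x, y) => (SimpleGraph.turanGraph N r).Adj x y) :=
    Finset.filter_congr (by rintro ⟨a, b⟩ _; exact Iff.rfl)
  calc r * #(Finset.univ.filter fun q : Fin N × Fin N => G.Adj q.1 q.2)
      = r * (2 * #G.edgeFinset) := by
        rw [ebridge, ← SimpleGraph.two_mul_card_edgeFinset]
    _ ≤ r * (2 * #(SimpleGraph.turanGraph N r).edgeFinset) := by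
        have := (SimpleGraph.isTuranMaximal_turanGraph (n := N) hr).2 h
        exact Nat.mul_le_mul_left _ (Nat.mul_le_mul_left _ this)
    _ = r * #(Finset.univ.filter fun q : Fin N × Fin N =>
          (SimpleGraph.turanGraph N r).Adj q.1 q.2) := by
        rw [SimpleGraph.two_mul_card_edgeFinset, ebridgeT]
    _ ≤ (r - 1) * N ^ 2 := turan_pair_count hr

theorem stmt1 (d k : ℕ) (hk : 2 ≤ k) (A : Set (EuclideanSpace ℝ (Fin d)))
    (hA : MeasurableSet A) (hfin : volume A < ⊤)
    (hfree : volume {p : Fin k → EuclideanSpace ℝ (Fin d) |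
      (∀ i, p i ∈ A) ∧ ∀ i j, i < j → 2 < dist (p i) (p j)} = 0) :
    (1 / 2) * volume {p : EuclideanSpace ℝ (Fin d) × EuclideanSpace ℝ (Fin d) |
        p.1 ∈ A ∧ p.2 ∈ A ∧ 2 < dist p.1 p.2}
      ≤ (1 / 2) * (1 - 1 / ((k : ℝ≥0∞) - 1)) * (volume A) ^ 2 := by
  classical
  obtain ⟨r, rfl⟩ : ∃ r, k = r + 1 := ⟨k - 1, by omega⟩
  have hr : 0 < r := by omega
  set n := volume A with hn
  set e2 := volume {p : EuclideanSpace ℝ (Fin d) × EuclideanSpace ℝ (Fin d) |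
      p.1 ∈ A ∧ p.2 ∈ A ∧ 2 < dist p.1 p.2} with he2
  have he2n : e2 ≤ n ^ 2 := by
    rw [he2, hn]
    calc volume {p : EuclideanSpace ℝ (Fin d) × EuclideanSpace ℝ (Fin d) |
          p.1 ∈ A ∧ p.2 ∈ A ∧ 2 < dist p.1 p.2}
        ≤ volume (A ×ˢ A) := measure_mono (fun p hp => ⟨hp.1, hp.2.1⟩)
      _ = volume A * volume A := by
          rw [Measure.volume_eq_prod, Measure.prod_prod]
      _ = volume A ^ 2 := (sq _).symm
  have he2top : e2 ≠ ⊤ := (lt_of_le_of_lt he2n (ENNReal.pow_lt_top hfin)).ne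
  have hmain : (r : ℝ≥0∞) * e2 ≤ ((r - 1 : ℕ) : ℝ≥0∞) * n ^ 2 := by
    by_cases hn0 : n = 0
    · have h0 : e2 = 0 := le_antisymm (by rw [hn0] at he2n; simpa using he2n) zero_le
      simp [h0]
    have key : ∀ N : ℕ, 2 ≤ N →
        (r : ℝ≥0∞) * ((N ^ 2 - N : ℕ) : ℝ≥0∞) * e2
          ≤ (((r - 1) * N ^ 2 : ℕ) : ℝ≥0∞) * n ^ 2 := by
      intro N hN
      set Bad : Set (Fin N → EuclideanSpace ℝ (Fin d)) :=
        ⋃ σ : Fin (r + 1) → Fin N, {x | (∀ t, x (σ t) ∈ A) ∧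
          ∀ t s, t < s → 2 < dist (x (σ t)) (x (σ s))} with hBadDef
      have hBad : volume Bad = 0 := by
        rw [hBadDef]
        refine measure_iUnion_null fun σ => ?_
        by_cases hinj : Function.Injective σ
        · exact marg_clique hA σ hinj hfree
        · rw [Function.not_injective_iff] at hinj
          obtain ⟨a, b, hab, hne⟩ := hinj
          have hempty : {x : Fin N → EuclideanSpace ℝ (Fin d) | (∀ t, x (σ t) ∈ A) ∧
              ∀ t s, t < s → 2 < dist (x (σ t)) (x (σ s))} = ∅ := by
            refine Set.eq_empty_iff_forall_notMem.2 fun x hx => ?_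
            rcases hne.lt_or_gt with hlt | hlt
            · have h2 := hx.2 a b hlt
              rw [hab, dist_self] at h2
              norm_num at h2
            · have h2 := hx.2 b a hlt
              rw [hab, dist_self] at h2
              norm_num at h2
          rw [hempty, measure_empty]
      set T : Fin N × Fin N → Set (Fin N → EuclideanSpace ℝ (Fin d)) := fun q =>
        {x | (∀ m, x m ∈ A) ∧ 2 < dist (x q.1) (x q.2)} with hT
      have hTmeas : ∀ q, MeasurableSet (T q) := fun q =>
        (meas_allA hA).inter (meas_far q.1 q.2)
      set P : Finset (Fin N × Fin N) := Finset.univ.filter (fun q => ¬ q.1 = q.2) with hP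
      set Ω : Set (Fin N → EuclideanSpace ℝ (Fin d)) := {x | ∀ m, x m ∈ A} with hΩ
      have hΩmeas : MeasurableSet Ω := meas_allA hA
      have hpt : ∀ x ∉ Bad,
          (r : ℝ≥0∞) * ∑ q ∈ P, (T q).indicator (1 : (Fin N → EuclideanSpace ℝ (Fin d)) → ℝ≥0∞) x
            ≤ (((r - 1) * N ^ 2 : ℕ) : ℝ≥0∞) * Ω.indicator (1 : (Fin N → EuclideanSpace ℝ (Fin d)) → ℝ≥0∞) x := by
        intro x hx
        by_cases hxΩ : x ∈ Ω
        · set G : SimpleGraph (Fin N) :=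
            { Adj := fun a b => 2 < dist (x a) (x b)
              symm := ⟨fun a b hab => by
                change 2 < dist (x a) (x b) at hab
                change 2 < dist (x b) (x a)
                rwa [dist_comm] at hab⟩
              loopless := ⟨fun a ha => by
                change 2 < dist (x a) (x a) at ha
                rw [dist_self] at ha
                norm_num at ha⟩ } with hG
          have hGfree : G.CliqueFree (r + 1) := by
            intro t ht
            set σ : Fin (r + 1) ↪o Fin N := t.orderEmbOfFin ht.card_eq with hσ
            apply hx
            refine Set.mem_iUnion.2 ⟨⇑σ, ⟨fun tt => hxΩ _, fun tt ss hts => ?_⟩⟩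
            have h1 : (σ tt) ∈ t := Finset.orderEmbOfFin_mem t ht.card_eq tt
            have h2 : (σ ss) ∈ t := Finset.orderEmbOfFin_mem t ht.card_eq ss
            have hne : σ tt ≠ σ ss := fun hc => (ne_of_lt hts) (σ.injective hc)
            exact ht.isClique h1 h2 hne
          have hsum : ∑ q ∈ P, (T q).indicator (1 : (Fin N → EuclideanSpace ℝ (Fin d)) → ℝ≥0∞) x
              = (#(Finset.univ.filter fun q : Fin N × Fin N => G.Adj q.1 q.2) : ℝ≥0∞) := by
            have step1 : ∑ q ∈ P, (T q).indicator (1 : (Fin N → EuclideanSpace ℝ (Fin d)) → ℝ≥0∞) x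
                = ∑ q ∈ P, (if G.Adj q.1 q.2 then (1 : ℝ≥0∞) else 0) := by
              refine Finset.sum_congr rfl fun q hq => ?_
              rw [Set.indicator_apply, Pi.one_apply]
              refine if_congr ?_ rfl rfl
              exact ⟨fun h => h.2, fun h => ⟨hxΩ, h⟩⟩
            have step2 : ∑ q ∈ P, (if G.Adj q.1 q.2 then (1 : ℝ≥0∞) else 0)
                = ∑ q : Fin N × Fin N, (if G.Adj q.1 q.2 then (1 : ℝ≥0∞) else 0) := by
              refine Finset.sum_subset (Finset.subset_univ P) fun q _ hq => ?_
              have : q.1 = q.2 := by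
                by_contra hc
                exact hq (by rw [hP]; simp [hc])
              rw [if_neg]
              rw [this]
              exact fun hadj => G.loopless.irrefl q.2 hadj
            rw [step1, step2, Finset.sum_boole]
          rw [hsum, Set.indicator_of_mem hxΩ, Pi.one_apply, mul_one]
          exact_mod_cast fin_turan hr G hGfree
        · have hzero : ∀ q ∈ P, (T q).indicator (1 : (Fin N → EuclideanSpace ℝ (Fin d)) → ℝ≥0∞) x = 0 := fun q hq =>
            Set.indicator_of_notMem (fun hc => hxΩ hc.1) _
          rw [Finset.sum_congr rfl hzero, Finset.sum_const_zero, mul_zero]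
          exact zero_le
      have hae : ∀ᵐ x : (Fin N → EuclideanSpace ℝ (Fin d)) ∂volume,
          (r : ℝ≥0∞) * ∑ q ∈ P, (T q).indicator (1 : (Fin N → EuclideanSpace ℝ (Fin d)) → ℝ≥0∞) x
            ≤ (((r - 1) * N ^ 2 : ℕ) : ℝ≥0∞) * Ω.indicator (1 : (Fin N → EuclideanSpace ℝ (Fin d)) → ℝ≥0∞) x := by
        have hb : ∀ᵐ x : (Fin N → EuclideanSpace ℝ (Fin d)) ∂volume, x ∉ Bad := by
          rw [ae_iff]
          simp only [not_not, Set.setOf_mem_eq]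
          exact hBad
        filter_upwards [hb] with x hx using hpt x hx
      have hint := lintegral_mono_ae hae
      have hL : ∫⁻ x, (r : ℝ≥0∞) * ∑ q ∈ P, (T q).indicator (1 : (Fin N → EuclideanSpace ℝ (Fin d)) → ℝ≥0∞) x ∂volume
          = (r : ℝ≥0∞) * ∑ q ∈ P, volume (T q) := by
        rw [lintegral_const_mul _ (Finset.measurable_sum _ fun q _ =>
          measurable_one.indicator (hTmeas q))]
        congr 1
        rw [lintegral_finset_sum _ fun q _ => measurable_one.indicator (hTmeas q)]
        exact Finset.sum_congr rfl fun q _ => lintegral_indicator_one (hTmeas q)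
      have hR : ∫⁻ x, (((r - 1) * N ^ 2 : ℕ) : ℝ≥0∞)
            * Ω.indicator (1 : (Fin N → EuclideanSpace ℝ (Fin d)) → ℝ≥0∞) x ∂volume
          = (((r - 1) * N ^ 2 : ℕ) : ℝ≥0∞) * volume Ω := by
        rw [lintegral_const_mul _ (measurable_one.indicator hΩmeas),
          lintegral_indicator_one hΩmeas]
      rw [hL, hR] at hint
      have hΩvol : volume Ω = n ^ N := by
        rw [hΩ, hn]
        have h : {x : Fin N → EuclideanSpace ℝ (Fin d) | ∀ m, x m ∈ A}
            = Set.pi Set.univ fun _ => A := by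
          ext y; simp [Set.mem_pi]
        rw [h, MeasureTheory.volume_pi, Measure.pi_pi, Finset.prod_const, Finset.card_univ,
          Fintype.card_fin]
      have hTq : ∀ q ∈ P, volume (T q) = e2 * n ^ (N - 2) := by
        intro q hq
        have hne : ¬ q.1 = q.2 := by
          have := Finset.mem_filter.1 (hP ▸ hq)
          exact this.2
        rw [hT, he2, hn]
        exact marg_pair hA hne
      have hPcard : #P = N ^ 2 - N := by
        have hdc : #(Finset.univ.filter fun q : Fin N × Fin N => q.1 = q.2) = N := by
          have hdiag : (Finset.univ.filter fun q : Fin N × Fin N => q.1 = q.2)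
              = Finset.univ.image (fun a : Fin N => (a, a)) := by
            ext ⟨a, b⟩
            simp only [Finset.mem_filter, Finset.mem_univ, true_and, Finset.mem_image,
              Prod.mk.injEq]
            constructor
            · rintro rfl; exact ⟨a, rfl, rfl⟩
            · rintro ⟨c, rfl, rfl⟩; rfl
          rw [hdiag, Finset.card_image_of_injective _ (fun a b hab => (Prod.ext_iff.1 hab).1),
            Finset.card_univ, Fintype.card_fin]
        have hsplit := Finset.card_filter_add_card_filter_not
          (s := (Finset.univ : Finset (Fin N × Fin N))) (p := fun q => q.1 = q.2)
        simp only [Finset.card_univ, Fintype.card_prod, Fintype.card_fin] at hsplit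
        rw [hP, sq]
        omega
      rw [Finset.sum_congr rfl hTq, Finset.sum_const, hPcard, hΩvol] at hint
      have hnsplit : n ^ N = n ^ 2 * n ^ (N - 2) := by
        rw [← pow_add]
        congr 1
        omega
      rw [hnsplit] at hint
      rw [← ENNReal.mul_le_mul_iff_left (c := n ^ (N - 2)) (pow_ne_zero _ hn0)
        (ENNReal.pow_ne_top hfin.ne)]
      calc (r : ℝ≥0∞) * ((N ^ 2 - N : ℕ) : ℝ≥0∞) * e2 * n ^ (N - 2)
          = (r : ℝ≥0∞) * ((N ^ 2 - N : ℕ) • (e2 * n ^ (N - 2))) := by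
            rw [nsmul_eq_mul]; ring
        _ ≤ (((r - 1) * N ^ 2 : ℕ) : ℝ≥0∞) * (n ^ 2 * n ^ (N - 2)) := hint
        _ = (((r - 1) * N ^ 2 : ℕ) : ℝ≥0∞) * n ^ 2 * n ^ (N - 2) := by ring
    -- limit argument
    have hreal : ∀ N : ℕ, 2 ≤ N →
        (r : ℝ) * ((N ^ 2 - N : ℕ) : ℝ) * e2.toReal
          ≤ (((r - 1) * N ^ 2 : ℕ) : ℝ) * (n ^ 2).toReal := by
      intro N hN
      have h1 := ENNReal.toReal_mono
        (ENNReal.mul_ne_top (ENNReal.natCast_ne_top _) (ENNReal.pow_ne_top hfin.ne))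
        (key N hN)
      rw [ENNReal.toReal_mul, ENNReal.toReal_mul, ENNReal.toReal_mul,
        ENNReal.toReal_natCast, ENNReal.toReal_natCast, ENNReal.toReal_natCast] at h1
      exact h1
    have hlim : (r : ℝ) * e2.toReal ≤ ((r - 1 : ℕ) : ℝ) * (n ^ 2).toReal := by
      by_contra hcon
      push_neg at hcon
      set a := e2.toReal with ha
      set b := (n ^ 2).toReal with hb
      set c := (r : ℝ) * a - ((r - 1 : ℕ) : ℝ) * b with hc
      have hcpos : 0 < c := by rw [hc]; linarith
      obtain ⟨N₀, hN₀⟩ := exists_nat_gt (((r : ℝ) * a) / c)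
      set N := N₀ + 2 with hNdef
      have hNr := hreal N (by omega)
      have hle : N ≤ N ^ 2 := Nat.le_self_pow (by norm_num) N
      have hcast : ((N ^ 2 - N : ℕ) : ℝ) = (N : ℝ) ^ 2 - (N : ℝ) := by
        push_cast [hle]
        ring
      have hcastC : (((r - 1) * N ^ 2 : ℕ) : ℝ) = ((r - 1 : ℕ) : ℝ) * (N : ℝ) ^ 2 := by
        push_cast
        ring
      rw [hcast, hcastC] at hNr
      have hNpos : (0 : ℝ) < N := by positivity
      have hN₀N : (N₀ : ℝ) ≤ (N : ℝ) := by
        rw [hNdef]; push_cast; linarith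
      have h1 : (r : ℝ) * a < N * c :=
        (div_lt_iff₀ hcpos).1 (lt_of_lt_of_le hN₀ hN₀N)
      have h2 : c * (N : ℝ) ^ 2 ≤ (r : ℝ) * (N : ℝ) * a := by nlinarith [hNr]
      nlinarith [h1, h2, hNpos, hcpos]
    have htr : ((r : ℝ≥0∞) * e2).toReal ≤ (((r - 1 : ℕ) : ℝ≥0∞) * n ^ 2).toReal := by
      rw [ENNReal.toReal_mul, ENNReal.toReal_mul, ENNReal.toReal_natCast,
        ENNReal.toReal_natCast]
      exact hlim
    exact (ENNReal.toReal_le_toReal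
      (ENNReal.mul_ne_top (ENNReal.natCast_ne_top _) he2top)
      (ENNReal.mul_ne_top (ENNReal.natCast_ne_top _) (ENNReal.pow_ne_top hfin.ne))).1 htr
  -- final massage
  have hr0 : (r : ℝ≥0∞) ≠ 0 := Nat.cast_ne_zero.2 hr.ne'
  have hrt : (r : ℝ≥0∞) ≠ ⊤ := ENNReal.natCast_ne_top r
  have hdiv : e2 ≤ (((r - 1 : ℕ) : ℝ≥0∞) / r) * n ^ 2 := by
    rw [div_eq_mul_inv, mul_right_comm, ← div_eq_mul_inv]
    rw [ENNReal.le_div_iff_mul_le (Or.inl hr0) (Or.inl hrt)]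
    rw [mul_comm e2 (r : ℝ≥0∞)]
    exact hmain
  have hfrac : (1 : ℝ≥0∞) - 1 / (((r + 1 : ℕ) : ℝ≥0∞) - 1) = ((r - 1 : ℕ) : ℝ≥0∞) / r := by
    have h1 : ((r + 1 : ℕ) : ℝ≥0∞) - 1 = (r : ℝ≥0∞) := by
      push_cast
      exact ENNReal.add_sub_cancel_right ENNReal.one_ne_top
    rw [h1, ENNReal.natCast_sub, Nat.cast_one,
      ENNReal.sub_div (fun _ _ => hr0), ENNReal.div_self hr0 hrt]
  rw [hfrac, mul_assoc]
  exact mul_le_mul_right (by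
    calc e2 ≤ (((r - 1 : ℕ) : ℝ≥0∞) / r) * n ^ 2 := hdiv
      _ = ((r - 1 : ℕ) : ℝ≥0∞) / (r : ℝ≥0∞) * n ^ 2 := rfl) _
end

section
/- Let D = {x ∈ ℝ² : 2 ≤ ‖x‖ ≤ R} for some R > 2 and let K ⊂ D be compact. Define the circular symmetrization K^st = {(r cos α, r sin α) : r ∈ [2,R], K ∩ S(0,r) ≠ ∅, |α| ≤ H¹(K ∩ S(0,r))/(2r)}, where S(0,r) is the circle of radius r and H¹ is 1-dimensional Hausdorff measure. Then K^st is compact. -/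
open MeasureTheory

/-- Circular (Pólya) symmetrization of a subset of the annulus with inner radius 2
and outer radius `R`. -/
def circSym (R : ℝ) (K : Set (EuclideanSpace ℝ (Fin 2))) :
    Set (EuclideanSpace ℝ (Fin 2)) :=
  {p | ∃ r α : ℝ, r ∈ Set.Icc 2 R ∧ (K ∩ Metric.sphere 0 r).Nonempty ∧
    ENNReal.ofReal (2 * r * |α|) ≤
      (MeasureTheory.Measure.hausdorffMeasure 1 :
        Measure (EuclideanSpace ℝ (Fin 2))) (K ∩ Metric.sphere 0 r) ∧
    p 0 = r * Real.cos α ∧ p 1 = r * Real.sin α}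

open MeasureTheory Real Set

noncomputable def circPt (s θ : ℝ) : EuclideanSpace ℝ (Fin 2) :=
  WithLp.toLp 2 ![s * Real.cos θ, s * Real.sin θ]

lemma circPt_apply0 (s θ : ℝ) : circPt s θ 0 = s * Real.cos θ := rfl
lemma circPt_apply1 (s θ : ℝ) : circPt s θ 1 = s * Real.sin θ := rfl

lemma norm_circPt {s : ℝ} (hs : 0 ≤ s) (θ : ℝ) : ‖circPt s θ‖ = s := by
  rw [EuclideanSpace.norm_eq]
  rw [show ∑ i, ‖circPt s θ i‖ ^ 2 = (s * Real.cos θ)^2 + (s * Real.sin θ)^2 by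
    simp [Fin.sum_univ_two, circPt_apply0, circPt_apply1, sq_abs]]
  rw [show (s * Real.cos θ)^2 + (s * Real.sin θ)^2 = s^2 by
    have := Real.sin_sq_add_cos_sq θ; nlinarith]
  exact Real.sqrt_sq hs

lemma dist_circPt {s : ℝ} (hs : 0 ≤ s) (θ θ' : ℝ) :
    dist (circPt s θ) (circPt s θ') = 2 * s * |Real.sin ((θ - θ') / 2)| := by
  rw [EuclideanSpace.dist_eq]
  have h1 : Real.cos (θ - θ') = Real.cos θ * Real.cos θ' + Real.sin θ * Real.sin θ' :=
    Real.cos_sub θ θ'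
  have h2 : Real.sin ((θ - θ') / 2) ^ 2 = 1/2 - Real.cos (θ - θ') / 2 := by
    have := Real.cos_sq ((θ - θ') / 2)
    have h3 := Real.sin_sq_add_cos_sq ((θ - θ') / 2)
    rw [show 2 * ((θ - θ') / 2) = θ - θ' by ring] at this
    nlinarith
  have key : ∑ i, dist (circPt s θ i) (circPt s θ' i) ^ 2
      = (2 * s * |Real.sin ((θ - θ') / 2)|)^2 := by
    simp only [Fin.sum_univ_two, circPt_apply0, circPt_apply1, Real.dist_eq, sq_abs]
    have hs1 := Real.sin_sq_add_cos_sq θ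
    have hs2 := Real.sin_sq_add_cos_sq θ'
    rw [mul_pow, mul_pow, sq_abs]
    linear_combination s^2 * hs1 + s^2 * hs2 + 2 * s^2 * h1 - 4 * s^2 * h2
  rw [key, Real.sqrt_sq (by positivity)]

lemma lipschitz_circPt {s : ℝ} (hs : 0 ≤ s) :
    LipschitzWith (Real.toNNReal s) (circPt s) := by
  apply LipschitzWith.of_dist_le_mul
  intro θ θ'
  rw [dist_circPt hs, Real.coe_toNNReal _ hs, Real.dist_eq]
  calc 2 * s * |Real.sin ((θ - θ') / 2)| ≤ 2 * s * |(θ - θ') / 2| := by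
        exact mul_le_mul_of_nonneg_left Real.abs_sin_le_abs (by positivity)
    _ = s * |θ - θ'| := by rw [abs_div]; simp [abs_of_nonneg]; ring

noncomputable def argFn (p : EuclideanSpace ℝ (Fin 2)) : ℝ :=
  Complex.arg (p 0 + p 1 * Complex.I)

lemma argFn_mem_Ioc (p : EuclideanSpace ℝ (Fin 2)) : argFn p ∈ Set.Ioc (-π) π :=
  Complex.arg_mem_Ioc _

lemma measurable_argFn : Measurable argFn := by
  apply Complex.measurable_arg.comp
  apply Measurable.add
  · exact (Complex.measurable_ofReal.comp ((measurable_pi_apply 0).comp (PiLp.continuous_ofLp ..).measurable))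
  · exact (Complex.measurable_ofReal.comp ((measurable_pi_apply 1).comp (PiLp.continuous_ofLp ..).measurable)).mul_const _

lemma argFn_circPt {s : ℝ} (hs : 0 < s) {θ : ℝ} (hθ : θ ∈ Set.Ioc (-π) π) :
    argFn (circPt s θ) = θ := by
  unfold argFn
  rw [circPt_apply0, circPt_apply1]
  have : ((s * Real.cos θ : ℝ) : ℂ) + ((s * Real.sin θ : ℝ) : ℂ) * Complex.I
      = (s : ℂ) * (Complex.cos θ + Complex.sin θ * Complex.I) := by
    push_cast [Complex.ofReal_cos, Complex.ofReal_sin]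
    ring
  rw [this]
  rw [Complex.arg_real_mul _ hs]
  exact Complex.arg_cos_add_sin_mul_I hθ

lemma norm_eq_complex (p : EuclideanSpace ℝ (Fin 2)) :
    ‖p‖ = ‖(p 0 + p 1 * Complex.I : ℂ)‖ := by
  rw [EuclideanSpace.norm_eq, Complex.norm_def, Complex.normSq_apply]
  congr 1
  simp [Fin.sum_univ_two, sq_abs]
  ring

lemma circPt_argFn {s : ℝ} (hs : 0 < s) {p : EuclideanSpace ℝ (Fin 2)}
    (hp : ‖p‖ = s) : circPt s (argFn p) = p := by
  set z : ℂ := p 0 + p 1 * Complex.I with hz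
  have habs : ‖z‖ = s := by rw [← norm_eq_complex, hp]
  have hz0 : z ≠ 0 := by
    intro h; rw [h] at habs; simp at habs; linarith
  have hre : Real.cos (argFn p) = p 0 / s := by
    rw [argFn, ← hz, Complex.cos_arg hz0, habs]
    simp [hz]
  have him : Real.sin (argFn p) = p 1 / s := by
    rw [argFn, ← hz, Complex.sin_arg, habs]
    simp [hz]
  rw [WithLp.ext_iff]; funext i
  fin_cases i
  · show circPt s (argFn p) 0 = p 0
    rw [circPt_apply0, hre]; field_simp
  · show circPt s (argFn p) 1 = p 1
    rw [circPt_apply1, him]; field_simp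

def angSet (K : Set (EuclideanSpace ℝ (Fin 2))) (s : ℝ) : Set ℝ :=
  Set.Ioc (-π) π ∩ (circPt s) ⁻¹' K

lemma sphere_inter_eq {K : Set (EuclideanSpace ℝ (Fin 2))} {s : ℝ} (hs : 0 < s) :
    K ∩ Metric.sphere 0 s = circPt s '' angSet K s := by
  ext p
  constructor
  · rintro ⟨hpK, hps⟩
    have hnorm : ‖p‖ = s := by
      rwa [mem_sphere_iff_norm, sub_zero] at hps
    refine ⟨argFn p, ⟨argFn_mem_Ioc p, ?_⟩, circPt_argFn hs hnorm⟩
    show circPt s (argFn p) ∈ K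
    rwa [circPt_argFn hs hnorm]
  · rintro ⟨θ, ⟨hθ, hθK⟩, rfl⟩
    refine ⟨hθK, ?_⟩
    rw [mem_sphere_iff_norm, sub_zero]
    exact norm_circPt hs.le θ

lemma lemB {K : Set (EuclideanSpace ℝ (Fin 2))} {s : ℝ} (hs : 0 < s) :
    (MeasureTheory.Measure.hausdorffMeasure 1 :
        Measure (EuclideanSpace ℝ (Fin 2))) (K ∩ Metric.sphere 0 s)
      ≤ ENNReal.ofReal s * volume (angSet K s) := by
  rw [sphere_inter_eq hs]
  have h := (lipschitz_circPt hs.le).hausdorffMeasure_image_le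
    (zero_le_one) (angSet K s)
  rw [MeasureTheory.hausdorffMeasure_real] at h
  refine h.trans (le_of_eq ?_)
  rw [ENNReal.rpow_one]
  rfl

lemma sin_ge_mul_cos {x b : ℝ} (hx : 0 ≤ x) (hxb : x ≤ b) (hb : b < π / 2) :
    x * Real.cos b ≤ Real.sin x := by
  rcases eq_or_lt_of_le hx with h | h
  · simp [← h]
  · have hxpi : x < π / 2 := lt_of_le_of_lt hxb hb
    have h1 : x < Real.tan x := Real.lt_tan h hxpi
    have hcos : 0 < Real.cos x := Real.cos_pos_of_mem_Ioo ⟨by linarith [Real.pi_pos], hxpi⟩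
    have h2 : x * Real.cos x < Real.sin x := by
      have := mul_lt_mul_of_pos_right h1 hcos
      rwa [Real.tan_eq_sin_div_cos, div_mul_cancel₀ _ hcos.ne'] at this
    have h3 : Real.cos b ≤ Real.cos x := by
      apply Real.cos_le_cos_of_nonneg_of_le_pi hx (by linarith [Real.pi_pos]) hxb
    nlinarith

lemma piece {r a δ : ℝ} (hr : 0 < r) (hδ0 : 0 < δ) (hδ : δ ≤ π / 2) (S : Set ℝ)
    (hS : S ⊆ Set.Ioc a (a + δ)) :
    volume S ≤ ENNReal.ofReal (1 / (r * Real.cos (δ / 2))) *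
      (MeasureTheory.Measure.hausdorffMeasure 1 :
        Measure (EuclideanSpace ℝ (Fin 2))) (circPt r '' S) := by
  have hcosδ : 0 < Real.cos (δ / 2) := by
    apply Real.cos_pos_of_mem_Ioo
    constructor <;> nlinarith [Real.pi_pos]
  set g : EuclideanSpace ℝ (Fin 2) → ℝ :=
    fun p => a + 2 * Real.arcsin (dist p (circPt r a) / (2 * r)) with hg
  have key : ∀ θ ∈ S, g (circPt r θ) = θ := by
    intro θ hθ
    obtain ⟨hθ1, hθ2⟩ := hS hθ
    have hw0 : 0 ≤ (θ - a) / 2 := by linarith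
    have hwδ : (θ - a) / 2 ≤ δ / 2 := by linarith
    rw [hg]
    simp only
    rw [dist_circPt hr.le, abs_of_nonneg (Real.sin_nonneg_of_nonneg_of_le_pi hw0
      (by nlinarith [Real.pi_pos]))]
    rw [show 2 * r * Real.sin ((θ - a) / 2) / (2 * r) = Real.sin ((θ - a) / 2) by
      field_simp]
    rw [Real.arcsin_sin (by nlinarith [Real.pi_pos]) (by nlinarith [Real.pi_pos])]
    ring
  have himage : g '' (circPt r '' S) = S := by
    rw [Set.image_image]
    calc (fun θ => g (circPt r θ)) '' S = id '' S := Set.image_congr key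
      _ = S := Set.image_id S
  have hlip : LipschitzOnWith (Real.toNNReal (1 / (r * Real.cos (δ / 2)))) g
      (circPt r '' S) := by
    apply LipschitzOnWith.of_dist_le_mul
    rintro x ⟨θ, hθ, rfl⟩ y ⟨θ', hθ', rfl⟩
    rw [key θ hθ, key θ' hθ', Real.coe_toNNReal _ (by positivity), Real.dist_eq,
      dist_circPt hr.le]
    have habs' : |θ - θ'| ≤ δ := by
      obtain ⟨h1, h2⟩ := hS hθ; obtain ⟨h3, h4⟩ := hS hθ'
      rw [abs_sub_le_iff]; constructor <;> linarith
    have habs : |θ - θ'| / 2 ≤ δ / 2 := by linarith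
    have hsin : |Real.sin ((θ - θ') / 2)| = Real.sin (|θ - θ'| / 2) := by
      rcases abs_cases (θ - θ') with ⟨h, _⟩ | ⟨h, hneg⟩
      · rw [h]
        rw [abs_of_nonneg (Real.sin_nonneg_of_nonneg_of_le_pi (by rw [← h]; positivity)
          (by rw [← h] at habs'; nlinarith [Real.pi_pos]))]
      · have hs0 : Real.sin ((θ - θ') / 2) ≤ 0 := by
          rw [show (θ - θ') / 2 = -(-(θ - θ') / 2) by ring, Real.sin_neg]
          apply neg_nonpos_of_nonneg
          apply Real.sin_nonneg_of_nonneg_of_le_pi (by linarith)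
          rw [h] at habs'; nlinarith [Real.pi_pos]
        rw [h, abs_of_nonpos hs0, show -(θ - θ') / 2 = -((θ - θ') / 2) by ring,
          Real.sin_neg]
    rw [hsin]
    have hbound : (|θ - θ'| / 2) * Real.cos (δ / 2) ≤ Real.sin (|θ - θ'| / 2) := by
      apply sin_ge_mul_cos (by positivity) (by linarith)
      nlinarith [Real.pi_pos]
    rw [div_mul_eq_mul_div, one_mul, le_div_iff₀ (by positivity)]
    nlinarith
  have h := hlip.hausdorffMeasure_image_le zero_le_one
  rw [himage, MeasureTheory.hausdorffMeasure_real] at h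
  refine h.trans (le_of_eq ?_)
  rw [ENNReal.rpow_one]
  rfl

lemma cover_Ioc {m : ℕ} (hm : 4 ≤ m) {θ : ℝ} (hθ : θ ∈ Set.Ioc (-π) π) :
    ∃ j < m, θ ∈ Set.Ioc (-π + j * (2 * π / m)) (-π + j * (2 * π / m) + 2 * π / m) := by
  have hm0 : (0:ℝ) < m := by positivity
  set δ : ℝ := 2 * π / m with hδdef
  have hδ0 : 0 < δ := by positivity
  set t : ℝ := (θ + π) / δ with ht
  have ht0 : 0 < t := by
    apply div_pos _ hδ0
    linarith [hθ.1]
  have htm : t ≤ m := by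
    rw [ht, div_le_iff₀ hδ0, hδdef]
    have : δ * m = 2 * π := by rw [hδdef]; field_simp
    calc θ + π ≤ 2 * π := by linarith [hθ.2]
      _ = (m:ℝ) * (2 * π / m) := by field_simp
  set n : ℕ := ⌈t⌉₊ with hn
  have hn1 : 1 ≤ n := Nat.one_le_iff_ne_zero.2 (by
    simp only [hn, ne_eq, Nat.ceil_eq_zero, not_le]; exact ht0)
  refine ⟨n - 1, ?_, ?_, ?_⟩
  · have : n ≤ m := Nat.ceil_le.2 (by exact_mod_cast htm)
    omega
  · have hc : (n : ℝ) < t + 1 := Nat.ceil_lt_add_one ht0.le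
    have hcast : ((n - 1 : ℕ) : ℝ) = (n : ℝ) - 1 := by
      push_cast [Nat.cast_sub hn1]; ring
    rw [hcast]
    have : (n : ℝ) - 1 < t := by linarith
    have h2 : ((n:ℝ) - 1) * δ < t * δ := by
      apply mul_lt_mul_of_pos_right this hδ0
    rw [ht] at h2
    rw [div_mul_cancel₀ _ hδ0.ne'] at h2
    linarith
  · have hc : t ≤ (n : ℝ) := Nat.le_ceil t
    have hcast : ((n - 1 : ℕ) : ℝ) = (n : ℝ) - 1 := by
      push_cast [Nat.cast_sub hn1]; ring
    rw [hcast]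
    have h2 : t * δ ≤ (n : ℝ) * δ := mul_le_mul_of_nonneg_right hc hδ0.le
    rw [ht, div_mul_cancel₀ _ hδ0.ne'] at h2
    linarith [h2]

lemma lemA_step {K : Set (EuclideanSpace ℝ (Fin 2))} (hK : IsClosed K) {r : ℝ}
    (hr : 0 < r) {m : ℕ} (hm : 4 ≤ m) :
    ENNReal.ofReal (r * Real.cos (π / m)) * volume (angSet K r) ≤
      (MeasureTheory.Measure.hausdorffMeasure 1 :
        Measure (EuclideanSpace ℝ (Fin 2))) (K ∩ Metric.sphere 0 r) := by
  have hm0 : (0:ℝ) < m := by positivity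
  set δ : ℝ := 2 * π / m with hδdef
  have hδ0 : 0 < δ := by positivity
  have hδπ : δ ≤ π / 2 := by
    rw [hδdef, div_le_div_iff₀ hm0 two_pos]
    have : (4:ℝ) ≤ m := by exact_mod_cast hm
    nlinarith [Real.pi_pos]
  have hδ2 : δ / 2 = π / m := by rw [hδdef]; ring
  have hcos : 0 < Real.cos (π / m) := by
    apply Real.cos_pos_of_mem_Ioo
    constructor
    · nlinarith [Real.pi_pos]
    · rw [div_lt_div_iff₀ hm0 two_pos]
      have : (4:ℝ) ≤ m := by exact_mod_cast hm
      nlinarith [Real.pi_pos]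
  set a : ℕ → ℝ := fun j => -π + j * δ with ha
  set S : ℕ → Set ℝ := fun j => angSet K r ∩ Set.Ioc (a j) (a j + δ) with hSdef
  set A : ℕ → Set (EuclideanSpace ℝ (Fin 2)) := fun j => circPt r '' S j with hA
  have hIsub : ∀ j < m, Set.Ioc (a j) (a j + δ) ⊆ Set.Ioc (-π) π := by
    intro j hj
    apply Set.Ioc_subset_Ioc
    · have : (0:ℝ) ≤ j * δ := by positivity
      simp [ha]; linarith
    · have hj1 : (j:ℝ) + 1 ≤ m := by exact_mod_cast hj
      have : ((j:ℝ) + 1) * δ ≤ m * δ := mul_le_mul_of_nonneg_right hj1 hδ0.le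
      have hmδ : (m:ℝ) * δ = 2 * π := by rw [hδdef]; field_simp
      simp only [ha]
      nlinarith
  have hA_eq : ∀ j < m, A j = (K ∩ Metric.sphere 0 r) ∩
      argFn ⁻¹' (Set.Ioc (a j) (a j + δ)) := by
    intro j hj
    ext p
    constructor
    · rintro ⟨θ, ⟨⟨hθI, hθK⟩, hθJ⟩, rfl⟩
      refine ⟨⟨hθK, ?_⟩, ?_⟩
      · rw [mem_sphere_iff_norm, sub_zero]; exact norm_circPt hr.le θ
      · show argFn (circPt r θ) ∈ Set.Ioc (a j) (a j + δ)
        rw [argFn_circPt hr hθI]; exact hθJ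
    · rintro ⟨⟨hpK, hps⟩, hparg⟩
      have hnorm : ‖p‖ = r := by rwa [mem_sphere_iff_norm, sub_zero] at hps
      refine ⟨argFn p, ⟨⟨argFn_mem_Ioc p, ?_⟩, hparg⟩, circPt_argFn hr hnorm⟩
      show circPt r (argFn p) ∈ K
      rwa [circPt_argFn hr hnorm]
  have hmeas : ∀ j ∈ Finset.range m, MeasurableSet (A j) := by
    intro j hj
    rw [hA_eq j (Finset.mem_range.1 hj)]
    exact ((hK.measurableSet.inter (Metric.isClosed_sphere.measurableSet)).inter
      (measurable_argFn measurableSet_Ioc))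
  have hdisj : Set.PairwiseDisjoint (↑(Finset.range m)) A := by
    intro i hi j hj hij
    rw [Finset.mem_coe, Finset.mem_range] at hi hj
    show Disjoint (A i) (A j)
    rw [hA_eq i hi, hA_eq j hj]
    apply Set.disjoint_of_subset (Set.inter_subset_right) (Set.inter_subset_right)
    apply Disjoint.preimage
    rw [Set.Ioc_disjoint_Ioc]
    rcases hij.lt_or_gt with h | h
    · have : (i:ℝ) + 1 ≤ j := by exact_mod_cast h
      calc min (a i + δ) (a j + δ) ≤ a i + δ := min_le_left _ _
        _ ≤ a j := by simp only [ha]; nlinarith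
        _ ≤ max (a i) (a j) := le_max_right _ _
    · have : (j:ℝ) + 1 ≤ i := by exact_mod_cast h
      calc min (a i + δ) (a j + δ) ≤ a j + δ := min_le_right _ _
        _ ≤ a i := by simp only [ha]; nlinarith
        _ ≤ max (a i) (a j) := le_max_left _ _
  have hcover : angSet K r ⊆ ⋃ j ∈ Finset.range m, S j := by
    intro θ hθ
    obtain ⟨j, hj, hjθ⟩ := cover_Ioc hm hθ.1
    exact Set.mem_biUnion (Finset.mem_range.2 hj) ⟨hθ, hjθ⟩
  have step1 : volume (angSet K r) ≤ ∑ j ∈ Finset.range m, volume (S j) :=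
    (measure_mono hcover).trans (measure_biUnion_finset_le _ _)
  have step2 : ∀ j < m, volume (S j) ≤
      ENNReal.ofReal (1 / (r * Real.cos (π / m))) *
        (MeasureTheory.Measure.hausdorffMeasure 1 :
          Measure (EuclideanSpace ℝ (Fin 2))) (A j) := by
    intro j hj
    rw [← hδ2]
    exact piece hr hδ0 hδπ (S j) (Set.inter_subset_right)
  have step3 : ∑ j ∈ Finset.range m,
      (MeasureTheory.Measure.hausdorffMeasure 1 :
        Measure (EuclideanSpace ℝ (Fin 2))) (A j) ≤
      (MeasureTheory.Measure.hausdorffMeasure 1 :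
        Measure (EuclideanSpace ℝ (Fin 2))) (K ∩ Metric.sphere 0 r) := by
    rw [← measure_biUnion_finset hdisj hmeas]
    apply measure_mono
    apply Set.iUnion₂_subset
    intro j hj
    rw [hA_eq j (Finset.mem_range.1 hj)]
    exact Set.inter_subset_left
  have chain : volume (angSet K r) ≤ ENNReal.ofReal (1 / (r * Real.cos (π / m))) *
      (MeasureTheory.Measure.hausdorffMeasure 1 :
        Measure (EuclideanSpace ℝ (Fin 2))) (K ∩ Metric.sphere 0 r) := by
    calc volume (angSet K r) ≤ ∑ j ∈ Finset.range m, volume (S j) := step1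
      _ ≤ ∑ j ∈ Finset.range m, ENNReal.ofReal (1 / (r * Real.cos (π / m))) *
          (MeasureTheory.Measure.hausdorffMeasure 1 :
            Measure (EuclideanSpace ℝ (Fin 2))) (A j) :=
        Finset.sum_le_sum fun j hj => step2 j (Finset.mem_range.1 hj)
      _ = ENNReal.ofReal (1 / (r * Real.cos (π / m))) *
          ∑ j ∈ Finset.range m, (MeasureTheory.Measure.hausdorffMeasure 1 :
            Measure (EuclideanSpace ℝ (Fin 2))) (A j) := by
        rw [Finset.mul_sum]
      _ ≤ _ := mul_le_mul_right step3 _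
  calc ENNReal.ofReal (r * Real.cos (π / m)) * volume (angSet K r)
      ≤ ENNReal.ofReal (r * Real.cos (π / m)) *
        (ENNReal.ofReal (1 / (r * Real.cos (π / m))) *
          (MeasureTheory.Measure.hausdorffMeasure 1 :
            Measure (EuclideanSpace ℝ (Fin 2))) (K ∩ Metric.sphere 0 r)) :=
        mul_le_mul_right chain _
    _ = _ := by
        rw [← mul_assoc, ← ENNReal.ofReal_mul (by positivity)]
        rw [show r * Real.cos (π / m) * (1 / (r * Real.cos (π / m))) = 1 by
          field_simp]
        simp

lemma angSet_volume_lt_top (K : Set (EuclideanSpace ℝ (Fin 2))) (r : ℝ) :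
    volume (angSet K r) < ⊤ := by
  apply lt_of_le_of_lt (measure_mono (Set.inter_subset_left))
  rw [Real.volume_Ioc]
  exact ENNReal.ofReal_lt_top

lemma lemA {K : Set (EuclideanSpace ℝ (Fin 2))} (hK : IsClosed K) {r : ℝ}
    (hr : 0 < r) :
    ENNReal.ofReal r * volume (angSet K r) ≤
      (MeasureTheory.Measure.hausdorffMeasure 1 :
        Measure (EuclideanSpace ℝ (Fin 2))) (K ∩ Metric.sphere 0 r) := by
  have htend : Filter.Tendsto
      (fun m : ℕ => ENNReal.ofReal (r * Real.cos (π / m)) * volume (angSet K r))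
      Filter.atTop (nhds (ENNReal.ofReal r * volume (angSet K r))) := by
    apply ENNReal.Tendsto.mul_const
    · apply ENNReal.tendsto_ofReal
      have h1 : Filter.Tendsto (fun m : ℕ => π / (m:ℝ)) Filter.atTop (nhds 0) :=
        tendsto_const_div_atTop_nhds_zero_nat π
      have h2 : Filter.Tendsto (fun m : ℕ => Real.cos (π / m)) Filter.atTop (nhds 1) := by
        have := (Real.continuous_cos.tendsto 0).comp h1
        simpa [Function.comp_def] using this
      have := h2.const_mul r
      simpa using this
    · exact Or.inr (angSet_volume_lt_top K r).ne
  apply le_of_tendsto htend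
  filter_upwards [Filter.eventually_ge_atTop 4] with m hm
  exact lemA_step hK hr hm

lemma continuous_circPt_pair : Continuous (fun q : ℝ × ℝ => circPt q.1 q.2) := by
  unfold circPt
  refine (PiLp.continuous_toLp ..).comp ?_
  apply continuous_pi
  intro i
  fin_cases i
  · show Continuous fun q : ℝ × ℝ => q.1 * Real.cos q.2
    fun_prop
  · show Continuous fun q : ℝ × ℝ => q.1 * Real.sin q.2
    fun_prop

lemma thickening_claim {K : Set (EuclideanSpace ℝ (Fin 2))} (hK : IsClosed K)
    (r : ℝ) {δ : ℝ} (hδ : 0 < δ) :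
    ∃ η > 0, ∀ s θ : ℝ, |s - r| ≤ η → θ ∈ Set.Ioc (-π) π → circPt s θ ∈ K →
      θ ∈ Metric.thickening δ (Set.Icc (-π) π ∩ (circPt r) ⁻¹' K) := by
  by_contra hcon
  push_neg at hcon
  have hseq : ∀ n : ℕ, ∃ s θ : ℝ, |s - r| ≤ 1 / (n + 1) ∧ θ ∈ Set.Ioc (-π) π ∧
      circPt s θ ∈ K ∧ θ ∉ Metric.thickening δ (Set.Icc (-π) π ∩ (circPt r) ⁻¹' K) := by
    intro n
    obtain ⟨s, θ, h1, h2, h3, h4⟩ := hcon (1 / (n + 1)) (by positivity)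
    exact ⟨s, θ, h1, h2, h3, h4⟩
  choose s θ hs hθmem hθK hθthick using hseq
  have hθIcc : ∀ n, θ n ∈ Set.Icc (-π) π := fun n => Set.Ioc_subset_Icc_self (hθmem n)
  obtain ⟨θ', hθ'mem, φ, hφ, hφtend⟩ := (isCompact_Icc (a := -π) (b := π)).tendsto_subseq hθIcc
  have hstend : Filter.Tendsto (fun n => s (φ n)) Filter.atTop (nhds r) := by
    rw [tendsto_iff_dist_tendsto_zero]
    apply squeeze_zero (fun n => dist_nonneg)
    · intro n
      show dist (s (φ n)) r ≤ 1 / (φ n + 1)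
      rw [Real.dist_eq]
      exact hs (φ n)
    · have h1 : Filter.Tendsto (fun n : ℕ => 1 / ((n:ℝ) + 1)) Filter.atTop (nhds 0) :=
        tendsto_one_div_add_atTop_nhds_zero_nat
      exact h1.comp hφ.tendsto_atTop
  have hlim : Filter.Tendsto (fun n => circPt (s (φ n)) (θ (φ n))) Filter.atTop
      (nhds (circPt r θ')) := by
    have := continuous_circPt_pair.tendsto (r, θ')
    exact this.comp (hstend.prodMk_nhds hφtend)
  have hKmem : circPt r θ' ∈ K := hK.mem_of_tendsto hlim
    (Filter.Eventually.of_forall fun n => hθK (φ n))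
  have hθ'T : θ' ∈ Set.Icc (-π) π ∩ (circPt r) ⁻¹' K := ⟨hθ'mem, hKmem⟩
  have : ∀ᶠ n in Filter.atTop, dist (θ (φ n)) θ' < δ := by
    have := Metric.tendsto_atTop.1 hφtend
    obtain ⟨N, hN⟩ := this δ hδ
    exact Filter.eventually_atTop.2 ⟨N, fun n hn => hN n hn⟩
  obtain ⟨n, hn⟩ := this.exists
  exact hθthick (φ n) (Metric.mem_thickening_iff.2 ⟨θ', hθ'T, hn⟩)

lemma canon_angle (α : ℝ) : ∃ β : ℝ, β ∈ Set.Ioc (-π) π ∧ Real.cos β = Real.cos α ∧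
    Real.sin β = Real.sin α ∧ |β| ≤ |α| := by
  refine ⟨(α : Real.Angle).toReal, Real.Angle.toReal_mem_Ioc _, ?_, ?_, ?_⟩
  · rw [Real.Angle.cos_toReal, Real.Angle.cos_coe]
  · rw [Real.Angle.sin_toReal, Real.Angle.sin_coe]
  · rcases le_or_gt π |α| with h | h
    · exact le_trans (Real.Angle.abs_toReal_le_pi _) h
    · have hmem : α ∈ Set.Ioc (-π) π := by
        rw [abs_lt] at h
        exact ⟨h.1, h.2.le⟩
      rw [Real.Angle.toReal_coe_eq_self_iff_mem_Ioc.2 hmem]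

theorem stmt9 (R : ℝ) (hR : 2 < R)
    (K : Set (EuclideanSpace ℝ (Fin 2))) (hK : IsCompact K)
    (hKD : K ⊆ {x : EuclideanSpace ℝ (Fin 2) | 2 ≤ ‖x‖ ∧ ‖x‖ ≤ R}) :
    IsCompact (circSym R K) := by
  have hKclosed : IsClosed K := hK.isClosed
  have hcirc_cont : ∀ s : ℝ, Continuous (circPt s) := by
    intro s
    have := continuous_circPt_pair.comp (Continuous.prodMk (continuous_const (y := s))
      continuous_id)
    exact this
  apply Metric.isCompact_of_isClosed_isBounded
  · -- closedness
    apply IsSeqClosed.isClosed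
    intro u p hu hup
    choose r α hrIcc hne hmeas hc0 hc1 using hu
    choose β hβIoc hβcos hβsin hβle using fun n => canon_angle (α n)
    have hr2 : ∀ n, 2 ≤ r n := fun n => (hrIcc n).1
    have hupt : ∀ n, u n = circPt (r n) (β n) := by
      intro n
      rw [WithLp.ext_iff]; funext i
      fin_cases i
      · show u n 0 = circPt (r n) (β n) 0
        rw [circPt_apply0, hβcos n, hc0 n]
      · show u n 1 = circPt (r n) (β n) 1
        rw [circPt_apply1, hβsin n, hc1 n]
    have hnorm : ∀ n, ‖u n‖ = r n := by
      intro n; rw [hupt n]; exact norm_circPt (by linarith [hr2 n]) _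
    set r' : ℝ := ‖p‖ with hr'
    have hrtend : Filter.Tendsto r Filter.atTop (nhds r') := by
      have h := (continuous_norm.tendsto p).comp hup
      have h2 : (fun n => ‖u n‖) = r := funext hnorm
      rw [show ((fun a => ‖a‖) ∘ u) = fun n => ‖u n‖ from rfl, h2] at h
      exact h
    have hr'Icc : r' ∈ Set.Icc 2 R :=
      isClosed_Icc.mem_of_tendsto hrtend (Filter.Eventually.of_forall hrIcc)
    have hr'pos : (0:ℝ) < r' := by linarith [hr'Icc.1]
    obtain ⟨β', hβ'mem, φ, hφ, hβtend⟩ :=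
      (isCompact_Icc (a := -π) (b := π)).tendsto_subseq
        (fun n => Set.Ioc_subset_Icc_self (hβIoc n))
    have hrφ : Filter.Tendsto (r ∘ φ) Filter.atTop (nhds r') :=
      hrtend.comp hφ.tendsto_atTop
    have hp_eq : p = circPt r' β' := by
      apply tendsto_nhds_unique (hup.comp hφ.tendsto_atTop)
      have := continuous_circPt_pair.tendsto (r', β')
      have h2 := this.comp (hrφ.prodMk_nhds hβtend)
      exact h2.congr fun n => by
        show circPt (r (φ n)) (β (φ n)) = u (φ n)
        rw [hupt (φ n)]
    -- nonempty at limit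
    choose x hx using hne
    obtain ⟨x', hx'K, ψ, hψ, hxtend⟩ := hK.tendsto_subseq (fun n => (hx (φ n)).1)
    have hx'sphere : x' ∈ Metric.sphere 0 r' := by
      rw [mem_sphere_iff_norm, sub_zero]
      have h1 : Filter.Tendsto (fun n => ‖x (φ (ψ n))‖) Filter.atTop (nhds ‖x'‖) :=
        (continuous_norm.tendsto x').comp hxtend
      have h2 : ∀ n, ‖x (φ (ψ n))‖ = r (φ (ψ n)) := by
        intro n
        have := (hx (φ (ψ n))).2
        rwa [mem_sphere_iff_norm, sub_zero] at this
      have h3 : Filter.Tendsto (fun n => r (φ (ψ n))) Filter.atTop (nhds r') :=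
        hrφ.comp hψ.tendsto_atTop
      simp_rw [h2] at h1
      exact tendsto_nhds_unique h1 h3
    -- measure inequality at the limit
    have hmeasβ : ∀ n, ENNReal.ofReal (2 * r n * |β n|) ≤
        (MeasureTheory.Measure.hausdorffMeasure 1 :
          Measure (EuclideanSpace ℝ (Fin 2))) (K ∩ Metric.sphere 0 (r n)) := by
      intro n
      refine le_trans (ENNReal.ofReal_le_ofReal ?_) (hmeas n)
      have := hβle n
      nlinarith [hr2 n, abs_nonneg (β n), abs_nonneg (α n)]
    set V : ℝ := (volume (angSet K r')).toReal with hV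
    have hfin : volume (angSet K r') ≠ ⊤ := (angSet_volume_lt_top K r').ne
    have hVol_eq : volume (angSet K r') = ENNReal.ofReal V := (ENNReal.ofReal_toReal hfin).symm
    have hmain : 2 * |β'| ≤ V := by
      apply le_of_forall_pos_le_add
      intro ε' hε'
      have h3 : 2 * |β'| ≤ V + 3 * (ε' / 3) → 2 * |β'| ≤ V + ε' := by
        intro h; linarith
      apply h3
      set ε : ℝ := ε' / 3 with hε
      have hε0 : 0 < ε := by positivity
      -- the closed angular set
      set Θcl : Set ℝ := Set.Icc (-π) π ∩ (circPt r') ⁻¹' K with hΘcl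
      have hΘclosed : IsClosed Θcl :=
        isClosed_Icc.inter (hKclosed.preimage (hcirc_cont r'))
      have hΘvol : volume Θcl ≤ volume (angSet K r') := by
        have hsub : Θcl ⊆ angSet K r' ∪ {-π} := by
          rintro θ ⟨hθIcc, hθK⟩
          rcases eq_or_lt_of_le hθIcc.1 with h | h
          · exact Or.inr (by simp [← h])
          · exact Or.inl ⟨⟨h, hθIcc.2⟩, hθK⟩
        calc volume Θcl ≤ volume (angSet K r' ∪ {-π}) := measure_mono hsub
          _ ≤ volume (angSet K r') + volume {-π} := measure_union_le _ _
          _ = volume (angSet K r') := by simp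
      have hΘfin : volume Θcl ≠ ⊤ :=
        (lt_of_le_of_lt hΘvol (angSet_volume_lt_top K r')).ne
      -- choose δ
      have hthickfin : volume (Metric.thickening 1 Θcl) ≠ ⊤ := by
        apply ne_of_lt
        apply lt_of_le_of_lt (measure_mono ?_)
        · exact (by rw [Real.volume_Icc]; exact ENNReal.ofReal_lt_top :
            volume (Set.Icc (-π - 1) (π + 1)) < ⊤)
        · intro y hy
          obtain ⟨z, hz, hdist⟩ := Metric.mem_thickening_iff.1 hy
          obtain ⟨hzIcc, _⟩ := hz
          rw [Real.dist_eq] at hdist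
          constructor
          · cases abs_sub_lt_iff.1 hdist; linarith [hzIcc.1]
          · cases abs_sub_lt_iff.1 hdist; linarith [hzIcc.2]
      have htendthick := tendsto_measure_thickening
        (μ := volume) (s := Θcl) ⟨1, one_pos, hthickfin⟩
      rw [hΘclosed.closure_eq] at htendthick
      -- choose δ with the two properties
      have hlt : volume Θcl < volume Θcl + ENNReal.ofReal ε :=
        ENNReal.lt_add_right hΘfin (ENNReal.ofReal_pos.2 hε0).ne' 
      have hev1 : ∀ᶠ δ in nhdsWithin 0 (Set.Ioi 0),
          volume (Metric.thickening δ Θcl) < volume Θcl + ENNReal.ofReal ε :=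
        htendthick.eventually_lt_const hlt
      have hev2 : ∀ᶠ δ in nhdsWithin 0 (Set.Ioi (0:ℝ)), 0 < δ :=
        eventually_mem_nhdsWithin
      obtain ⟨δ, hδmeas, hδ0⟩ := (hev1.and hev2).exists
      -- get η from thickening claim
      obtain ⟨η, hη0, hηprop⟩ := thickening_claim hKclosed r' hδ0
      -- choose a good index n
      have hev3 : ∀ᶠ n in Filter.atTop, |r (φ n) - r'| ≤ η := by
        have := Metric.tendsto_atTop.1 hrφ η hη0
        obtain ⟨N, hN⟩ := this
        refine Filter.eventually_atTop.2 ⟨N, fun n hn => ?_⟩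
        have := hN n hn
        rw [Real.dist_eq] at this
        exact this.le
      have hev4 : ∀ᶠ n in Filter.atTop, |β (φ n) - β'| < ε := by
        have := Metric.tendsto_atTop.1 hβtend ε hε0
        obtain ⟨N, hN⟩ := this
        refine Filter.eventually_atTop.2 ⟨N, fun n hn => ?_⟩
        have := hN n hn
        rwa [Real.dist_eq] at this
      obtain ⟨n, hnr, hnβ⟩ := (hev3.and hev4).exists
      set a := r (φ n) with hadef
      set b := β (φ n) with hbdef
      have ha2 : 2 ≤ a := hr2 (φ n)
      have ha0 : 0 < a := by linarith
      -- chain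
      have hsub : angSet K a ⊆ Metric.thickening δ Θcl := by
        rintro θ ⟨hθIoc, hθK⟩
        exact hηprop a θ hnr hθIoc hθK
      have hchain : ENNReal.ofReal (2 * a * |b|) ≤ ENNReal.ofReal (a * (V + ε)) := by
        calc ENNReal.ofReal (2 * a * |b|)
            ≤ (MeasureTheory.Measure.hausdorffMeasure 1 :
              Measure (EuclideanSpace ℝ (Fin 2))) (K ∩ Metric.sphere 0 a) := hmeasβ (φ n)
          _ ≤ ENNReal.ofReal a * volume (angSet K a) := lemB ha0
          _ ≤ ENNReal.ofReal a * volume (Metric.thickening δ Θcl) :=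
              mul_le_mul_right (measure_mono hsub) _
          _ ≤ ENNReal.ofReal a * (volume Θcl + ENNReal.ofReal ε) :=
              mul_le_mul_right hδmeas.le _
          _ ≤ ENNReal.ofReal a * (ENNReal.ofReal V + ENNReal.ofReal ε) := by
              apply mul_le_mul_right
              apply add_le_add_left
              rw [← hVol_eq]
              exact hΘvol
          _ = ENNReal.ofReal (a * (V + ε)) := by
              rw [← ENNReal.ofReal_add ENNReal.toReal_nonneg hε0.le,
                ← ENNReal.ofReal_mul ha0.le]
      have hreal : 2 * a * |b| ≤ a * (V + ε) := by
        have hVnn : 0 ≤ V := ENNReal.toReal_nonneg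
        rwa [ENNReal.ofReal_le_ofReal_iff (by positivity)] at hchain
      have hb : 2 * |b| ≤ V + ε := by
        have hVnn : 0 ≤ V := ENNReal.toReal_nonneg
        nlinarith [abs_nonneg b]
      have hββ : |β'| ≤ |b| + ε := by
        have := abs_sub_abs_le_abs_sub β' b
        rw [abs_sub_comm] at hnβ
        linarith [le_of_lt hnβ]
      linarith
    -- final membership
    refine ⟨r', β', hr'Icc, ⟨x', hx'K, hx'sphere⟩, ?_, ?_, ?_⟩
    · calc ENNReal.ofReal (2 * r' * |β'|)
          = ENNReal.ofReal r' * ENNReal.ofReal (2 * |β'|) := by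
            rw [← ENNReal.ofReal_mul hr'pos.le]; ring_nf
        _ ≤ ENNReal.ofReal r' * ENNReal.ofReal V :=
            mul_le_mul_right (ENNReal.ofReal_le_ofReal hmain) _
        _ = ENNReal.ofReal r' * volume (angSet K r') := by rw [← hVol_eq]
        _ ≤ _ := lemA hKclosed hr'pos
    · rw [hp_eq]; exact circPt_apply0 r' β'
    · rw [hp_eq]; exact circPt_apply1 r' β' 
  · -- boundedness
    apply Metric.isBounded_closedBall (x := (0 : EuclideanSpace ℝ (Fin 2))) (r := R) |>.subset
    rintro p ⟨r, α, hrIcc, hne, hmeas, hc0, hc1⟩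
    have hp_eq : p = circPt r α := by
      rw [WithLp.ext_iff]; funext i
      fin_cases i
      · exact hc0
      · exact hc1
    rw [Metric.mem_closedBall, dist_zero_right, hp_eq,
      norm_circPt (by linarith [hrIcc.1]) α]
    exact hrIcc.2
end

section
/- Let W : X × X → [0,1] be a symmetric measurable function on a probability space X with ∫∫ ∏_{1≤i<j≤k} W(x_i, x_j) dx_1...dx_k = 0. Then ∫∫ W(x,y) dx dy ≤ 1 − 1/(k−1). -/
open MeasureTheory Filter

section aux

open Finset in
theorem turan_wt_aux {α : Type*} [DecidableEq α] (r : ℕ) :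
    ∀ (s : Finset α) (A : α → α → ℝ),
    (∀ i j, A i j = A j i) → (∀ i j, 0 ≤ A i j) → (∀ i j, A i j ≤ 1) →
    (∀ t ⊆ s, t.card = r + 2 → ∃ i ∈ t, ∃ j ∈ t, i ≠ j ∧ A i j = 0) →
    ∑ i ∈ s, ∑ j ∈ s \ {i}, A i j ≤ (1 - 1/(r+1)) * (s.card : ℝ)^2 := by
  induction r with
  | zero =>
    intro s A hs h0 h1 hfree
    have hz : ∀ i ∈ s, ∀ j ∈ s \ {i}, A i j = 0 := by
      intro i hi j hj
      rw [Finset.mem_sdiff, mem_singleton] at hj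
      obtain ⟨a, ha, b, hb, hab, h0ab⟩ := hfree {i, j} (by
        intro x hx; rcases mem_insert.1 hx with h | h
        · exact h ▸ hi
        · exact (mem_singleton.1 h) ▸ hj.1) (by
          rw [card_insert_of_notMem (by simp [Ne.symm hj.2]), card_singleton])
      rcases mem_insert.1 ha with rfl | ha' <;> rcases mem_insert.1 hb with rfl | hb'
      · exact absurd rfl hab
      · rwa [mem_singleton.1 hb'] at h0ab
      · rw [mem_singleton.1 ha'] at h0ab; rw [hs]; exact h0ab
      · rw [mem_singleton.1 ha', mem_singleton.1 hb'] at hab; exact absurd rfl hab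
    rw [Finset.sum_eq_zero fun i hi => Finset.sum_eq_zero fun j hj => hz i hi j hj]
    norm_num
  | succ r ih =>
    intro s A hs h0 h1 hfree
    rcases s.eq_empty_or_nonempty with rfl | hsne
    · simp
    classical
    set nbr : α → Finset α := fun v => s.filter (fun u => u ≠ v ∧ A v u ≠ 0) with hnbr
    obtain ⟨v, hv, hvmax⟩ := s.exists_max_image (fun v => (nbr v).card) hsne
    set N := nbr v with hN
    have hNs : N ⊆ s := filter_subset _ _
    have hvN : v ∉ N := fun h => (mem_filter.1 h).2.1 rfl
    set n : ℝ := (s.card : ℝ) with hn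
    set m : ℝ := (N.card : ℝ) with hm
    have hmn : m ≤ n := Nat.cast_le.2 (Finset.card_le_card hNs)
    have hm0 : (0:ℝ) ≤ m := Nat.cast_nonneg _
    -- row sums bounded by m
    have hrow : ∀ i ∈ s, ∑ j ∈ s \ {i}, A i j ≤ m := by
      intro i hi
      have e1 : nbr i = (s \ {i}).filter (fun u => A i u ≠ 0) := by
        ext u; simp only [hnbr, mem_filter, Finset.mem_sdiff, mem_singleton]; tauto
      have e2 : ∑ j ∈ s \ {i}, A i j = ∑ j ∈ nbr i, A i j := by
        rw [e1, Finset.sum_filter_ne_zero]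
      rw [e2]
      calc ∑ j ∈ nbr i, A i j ≤ ∑ j ∈ nbr i, 1 := Finset.sum_le_sum fun j _ => h1 i j
        _ = ((nbr i).card : ℝ) := by rw [Finset.sum_const, nsmul_eq_mul, mul_one]
        _ ≤ m := Nat.cast_le.2 (hvmax i hi)
    -- N is K_{r+2}-free
    have hNfree : ∀ t ⊆ N, t.card = r + 2 → ∃ i ∈ t, ∃ j ∈ t, i ≠ j ∧ A i j = 0 := by
      intro t ht hcard
      have hvt : v ∉ t := fun h => hvN (ht h)
      obtain ⟨a, ha, b, hb, hab, h0ab⟩ := hfree (insert v t)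
        (insert_subset hv (ht.trans hNs))
        (by rw [card_insert_of_notMem hvt, hcard])
      rcases mem_insert.1 ha with rfl | ha' <;> rcases mem_insert.1 hb with rfl | hb'
      · exact absurd rfl hab
      · exact absurd h0ab (mem_filter.1 (ht hb')).2.2
      · rw [hs] at h0ab; exact absurd h0ab (mem_filter.1 (ht ha')).2.2
      · exact ⟨a, ha', b, hb', hab, h0ab⟩
    have hinner : ∑ i ∈ N, ∑ j ∈ N \ {i}, A i j ≤ (1 - 1/(r+1)) * m^2 :=
      ih N A hs h0 h1 hNfree
    -- decompose the full sum
    have hsplit : ∑ i ∈ s, ∑ j ∈ s \ {i}, A i j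
        ≤ ∑ i ∈ N, ∑ j ∈ N \ {i}, A i j + 2 * ((n - m) * m) := by
      have hdecomp : ∑ i ∈ s, ∑ j ∈ s \ {i}, A i j
          = ∑ i ∈ N, ∑ j ∈ s \ {i}, A i j + ∑ i ∈ s \ N, ∑ j ∈ s \ {i}, A i j := by
        rw [← Finset.sum_union (disjoint_sdiff), Finset.union_sdiff_of_subset hNs]
      have hout : ∑ i ∈ s \ N, ∑ j ∈ s \ {i}, A i j ≤ (n - m) * m := by
        calc ∑ i ∈ s \ N, ∑ j ∈ s \ {i}, A i j
            ≤ ∑ i ∈ s \ N, m := Finset.sum_le_sum fun i hi => hrow i (mem_sdiff.1 hi).1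
          _ = ((s \ N).card : ℝ) * m := by rw [Finset.sum_const, nsmul_eq_mul]
          _ = (n - m) * m := by rw [Finset.card_sdiff_of_subset hNs]; push_cast [Finset.card_le_card hNs]; ring
      have hNin : ∀ i ∈ N, ∑ j ∈ s \ {i}, A i j
          = ∑ j ∈ N \ {i}, A i j + ∑ j ∈ s \ N, A i j := by
        intro i hi
        have : s \ {i} = (N \ {i}) ∪ (s \ N) := by
          ext u
          simp only [Finset.mem_sdiff, mem_union, mem_singleton]
          constructor
          · intro ⟨hu, hne⟩
            by_cases h : u ∈ N
            · exact Or.inl ⟨h, hne⟩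
            · exact Or.inr ⟨hu, h⟩
          · rintro (⟨h1', h2⟩ | ⟨h1', h2⟩)
            · exact ⟨hNs h1', h2⟩
            · exact ⟨h1', fun h => h2 (h ▸ hi)⟩
        rw [this, Finset.sum_union]
        exact Finset.disjoint_left.2 fun u hu h2 => (mem_sdiff.1 h2).2 (mem_sdiff.1 hu).1
      have hcross : ∑ i ∈ N, ∑ j ∈ s \ N, A i j ≤ (n - m) * m := by
        rw [Finset.sum_comm]
        calc ∑ j ∈ s \ N, ∑ i ∈ N, A i j
            ≤ ∑ j ∈ s \ N, ∑ i ∈ s \ {j}, A j i := by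
              refine Finset.sum_le_sum fun j hj => ?_
              rw [Finset.mem_sdiff] at hj
              refine le_trans (le_of_eq (Finset.sum_congr rfl fun i _ => hs i j)) ?_
              refine Finset.sum_le_sum_of_subset_of_nonneg ?_ (fun i _ _ => h0 j i)
              intro i hi
              rw [Finset.mem_sdiff, mem_singleton]
              exact ⟨hNs hi, fun h => hj.2 (h ▸ hi)⟩
          _ ≤ ∑ j ∈ s \ N, m := Finset.sum_le_sum fun j hj => hrow j (mem_sdiff.1 hj).1
          _ = (n - m) * m := by
              rw [Finset.sum_const, nsmul_eq_mul, Finset.card_sdiff_of_subset hNs]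
              push_cast [Finset.card_le_card hNs]; ring
      calc ∑ i ∈ s, ∑ j ∈ s \ {i}, A i j
          = ∑ i ∈ N, (∑ j ∈ N \ {i}, A i j + ∑ j ∈ s \ N, A i j)
            + ∑ i ∈ s \ N, ∑ j ∈ s \ {i}, A i j := by
            rw [hdecomp]; congr 1; exact Finset.sum_congr rfl hNin
        _ = ∑ i ∈ N, ∑ j ∈ N \ {i}, A i j + ∑ i ∈ N, ∑ j ∈ s \ N, A i j
            + ∑ i ∈ s \ N, ∑ j ∈ s \ {i}, A i j := by rw [Finset.sum_add_distrib]
        _ ≤ ∑ i ∈ N, ∑ j ∈ N \ {i}, A i j + (n - m) * m + (n - m) * m := by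
            gcongr
        _ = ∑ i ∈ N, ∑ j ∈ N \ {i}, A i j + 2 * ((n - m) * m) := by ring
    -- arithmetic
    have harith : (1 - 1/((r:ℝ)+1)) * m^2 + 2 * ((n - m) * m)
        ≤ (1 - 1/((r:ℝ)+1+1)) * n^2 := by
      have hr1 : (0:ℝ) < (r:ℝ) + 1 := by positivity
      have hr2 : (0:ℝ) < (r:ℝ) + 2 := by positivity
      have key : (1 - 1/((r:ℝ)+1+1)) * n^2 - ((1 - 1/((r:ℝ)+1)) * m^2 + 2 * ((n - m) * m))
          = (((r:ℝ)+1)*n - ((r:ℝ)+2)*m)^2 / (((r:ℝ)+1)*((r:ℝ)+2)) := by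
        field_simp
        ring
      rw [← sub_nonneg, key]
      positivity
    calc ∑ i ∈ s, ∑ j ∈ s \ {i}, A i j
        ≤ (1 - 1/((r:ℝ)+1)) * m^2 + 2 * ((n - m) * m) := by
          refine hsplit.trans (by gcongr)
      _ ≤ (1 - 1/((r:ℝ)+1+1)) * n^2 := harith
      _ = (1 - 1/((((r:ℕ)+1:ℕ):ℝ)+1)) * n^2 := by push_cast; ring

lemma measurePreserving_comp_inj {X : Type*} [MeasurableSpace X] (μ : Measure X)
    [IsProbabilityMeasure μ] {ι κ : Type*} [Fintype ι] [Fintype κ]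
    (σ : κ → ι) (hσ : Function.Injective σ) :
    MeasurePreserving (fun x : ι → X => x ∘ σ)
      (Measure.pi fun _ => μ) (Measure.pi fun _ => μ) := by
  classical
  have hmeas : Measurable (fun x : ι → X => x ∘ σ) :=
    measurable_pi_lambda _ fun k => measurable_pi_apply (σ k)
  refine ⟨hmeas, ?_⟩
  refine (Measure.pi_eq fun s hs => ?_).symm
  set s' : ι → Set X := fun i => if h : ∃ k, σ k = i then s h.choose else Set.univ with hs'
  have hs'meas : ∀ i, MeasurableSet (s' i) := by
    intro i
    by_cases h : ∃ k, σ k = i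
    · simp only [hs', dif_pos h]; exact hs _
    · simp only [hs', dif_neg h]; exact MeasurableSet.univ
  have hsk : ∀ k, s' (σ k) = s k := by
    intro k
    have h : ∃ k', σ k' = σ k := ⟨k, rfl⟩
    have : h.choose = k := hσ h.choose_spec
    simp only [hs', dif_pos h, this]
  have hpre : (fun x : ι → X => x ∘ σ) ⁻¹' (Set.pi Set.univ s) = Set.pi Set.univ s' := by
    ext x
    simp only [Set.mem_preimage, Set.mem_pi, Set.mem_univ, true_implies, Function.comp_apply]
    constructor
    · intro h i
      by_cases hi : ∃ k, σ k = i
      · simp only [hs', dif_pos hi]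
        have := h hi.choose
        rwa [hi.choose_spec] at this
      · simp only [hs', dif_neg hi, Set.mem_univ]
    · intro h k
      have := h (σ k)
      rwa [hsk k] at this
  rw [Measure.map_apply hmeas (MeasurableSet.univ_pi hs), hpre,
    Measure.pi_pi]
  have : ∏ k, μ (s k) = ∏ k, μ (s' (σ k)) := by
    exact Finset.prod_congr rfl fun k _ => by rw [hsk k]
  have himg : ∏ k : κ, μ (s' (σ k))
      = ∏ i ∈ Finset.univ.image σ, μ (s' i) :=
    (Finset.prod_image (f := fun i => μ (s' i)) (fun a _ b _ h => hσ h)).symm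
  rw [this, himg]
  refine (Finset.prod_subset (Finset.subset_univ _) fun i _ hi => ?_).symm
  have : ¬ ∃ k, σ k = i := by
    intro ⟨k, hk⟩
    exact hi (Finset.mem_image.2 ⟨k, Finset.mem_univ _, hk⟩)
  simp only [hs', dif_neg this]
  exact measure_univ

end aux

theorem stmt17 {X : Type*} [MeasureSpace X]
    [IsProbabilityMeasure (volume : Measure X)]
    (k : ℕ) (hk : 2 ≤ k) (W : X → X → ℝ)
    (hmeas : Measurable (Function.uncurry W))
    (hsymm : ∀ x y, W x y = W y x)
    (h0 : ∀ x y, 0 ≤ W x y) (h1 : ∀ x y, W x y ≤ 1)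
    (hfree : ∫ x : Fin k → X,
      ∏ e ∈ Finset.univ.filter (fun e : Fin k × Fin k => e.1 < e.2),
        W (x e.1) (x e.2) = 0) :
    ∫ x, ∫ y, W x y ≤ 1 - 1 / ((k : ℝ) - 1) := by
  classical
  set μ : Measure X := volume with hμ
  have hWm : ∀ {m : Type} (i j : m), Measurable (fun y : m → X => W (y i) (y j)) := by
    intro m i j
    have heq : (fun y : m → X => W (y i) (y j))
        = Function.uncurry W ∘ (fun y => (y i, y j)) := rfl
    rw [heq]
    exact hmeas.comp ((measurable_pi_apply _).prodMk (measurable_pi_apply _))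
  have hWnorm : ∀ p : X × X, ‖Function.uncurry W p‖ ≤ 1 := fun p => by
    have heq : Function.uncurry W p = W p.1 p.2 := rfl
    rw [heq, Real.norm_eq_abs, abs_of_nonneg (h0 _ _)]; exact h1 _ _
  have hWint : Integrable (Function.uncurry W) (μ.prod μ) :=
    Integrable.mono' (integrable_const 1) hmeas.aestronglyMeasurable
      (Filter.Eventually.of_forall hWnorm)
  set D : ℝ := ∫ p : X × X, W p.1 p.2 ∂(μ.prod μ) with hD
  have hgoal_eq : ∫ x, ∫ y, W x y = D := (integral_prod _ hWint).symm
  have hD0 : 0 ≤ D := integral_nonneg fun p => h0 _ _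
  have hk1 : (0:ℝ) < (k:ℝ) - 1 := by
    have : (2:ℝ) ≤ (k:ℝ) := by exact_mod_cast hk
    linarith
  -- the K_k density function is a.e. zero
  set F : (Fin k → X) → ℝ := fun y =>
    ∏ e ∈ Finset.univ.filter (fun e : Fin k × Fin k => e.1 < e.2), W (y e.1) (y e.2) with hF
  have hFmeas : Measurable F :=
    Finset.measurable_prod _ fun e _ => hWm e.1 e.2
  have hFnonneg : ∀ y, 0 ≤ F y := fun y => Finset.prod_nonneg fun e _ => h0 _ _
  have hFle : ∀ y, F y ≤ 1 := fun y =>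
    Finset.prod_le_one (fun e _ => h0 _ _) (fun e _ => h1 _ _)
  have hFint : Integrable F (Measure.pi fun _ : Fin k => μ) :=
    Integrable.mono' (integrable_const 1) hFmeas.aestronglyMeasurable
      (Filter.Eventually.of_forall fun y => by
        rw [Real.norm_eq_abs, abs_of_nonneg (hFnonneg y)]; exact hFle y)
  have hFae : F =ᵐ[Measure.pi fun _ : Fin k => μ] 0 := by
    have h' : ∫ y, F y ∂(Measure.pi fun _ : Fin k => μ) = 0 := by
      rw [← MeasureTheory.volume_pi]; exact hfree
    exact (integral_eq_zero_iff_of_nonneg hFnonneg hFint).1 h'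
  -- key finite-n bound
  have key : ∀ n : ℕ, 2 ≤ n →
      (n:ℝ) * ((n:ℝ) - 1) * D ≤ (1 - 1/((k:ℝ)-1)) * (n:ℝ)^2 := by
    intro n hn
    set Pn : Measure (Fin n → X) := Measure.pi fun _ => μ with hPn
    -- a.e., every injection yields a zero product
    have hae : ∀ᵐ x ∂Pn, ∀ σ : {σ : Fin k → Fin n // Function.Injective σ},
        F (x ∘ σ.1) = 0 := by
      rw [MeasureTheory.ae_all_iff]
      intro σ
      have hmp := measurePreserving_comp_inj μ σ.1 σ.2 (ι := Fin n) (κ := Fin k)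
      have h2 : F =ᵐ[Pn.map (fun x : Fin n → X => x ∘ σ.1)] (0 : (Fin k → X) → ℝ) := by
        rw [hmp.map_eq]; exact hFae
      have h3 := MeasureTheory.ae_eq_comp hmp.measurable.aemeasurable h2
      filter_upwards [h3] with x hx
      exact hx
    -- a.e. pointwise Turán bound
    have hae2 : ∀ᵐ x ∂Pn,
        ∑ i : Fin n, ∑ j ∈ Finset.univ \ {i}, W (x i) (x j)
          ≤ (1 - 1/((k:ℝ)-1)) * (n:ℝ)^2 := by
      filter_upwards [hae] with x hx
      have hfree' : ∀ t ⊆ (Finset.univ : Finset (Fin n)), t.card = (k-2) + 2 →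
          ∃ i ∈ t, ∃ j ∈ t, i ≠ j ∧ W (x i) (x j) = 0 := by
        intro t _ hcard
        have hcardk : t.card = k := by omega
        set σ : Fin k → Fin n := fun a => ((t.orderIsoOfFin hcardk) a : Fin n) with hσ
        have hσinj : Function.Injective σ := fun a b hab =>
          (t.orderIsoOfFin hcardk).injective (Subtype.ext hab)
        have hz := hx ⟨σ, hσinj⟩
        rw [hF] at hz
        obtain ⟨e, he, hze⟩ := Finset.prod_eq_zero_iff.1 hz
        have helt : e.1 < e.2 := (Finset.mem_filter.1 he).2
        refine ⟨σ e.1, ((t.orderIsoOfFin hcardk) e.1).2, σ e.2,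
          ((t.orderIsoOfFin hcardk) e.2).2, ?_, ?_⟩
        · intro hcontra
          exact absurd (hσinj hcontra) (ne_of_lt helt)
        · exact hze
      have := turan_wt_aux (k-2) Finset.univ (fun i j => W (x i) (x j))
        (fun i j => hsymm _ _) (fun i j => h0 _ _) (fun i j => h1 _ _) hfree'
      have hcast : (1 - 1/(((k-2:ℕ):ℝ)+1)) * ((Finset.univ : Finset (Fin n)).card : ℝ)^2
          = (1 - 1/((k:ℝ)-1)) * (n:ℝ)^2 := by
        rw [Finset.card_univ, Fintype.card_fin]
        congr 2
        rw [Nat.cast_sub hk]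
        norm_num
        ring
      rw [hcast] at this
      exact this
    -- integrability of the terms
    have hterm_meas : ∀ i j : Fin n, Measurable (fun x : Fin n → X => W (x i) (x j)) :=
      fun i j => hWm i j
    have hterm_int : ∀ i j : Fin n, Integrable (fun x : Fin n → X => W (x i) (x j)) Pn :=
      fun i j => Integrable.mono' (integrable_const 1)
        (hterm_meas i j).aestronglyMeasurable
        (Filter.Eventually.of_forall fun x => by
          rw [Real.norm_eq_abs, abs_of_nonneg (h0 _ _)]; exact h1 _ _)
    have hsum_int : Integrable
        (fun x : Fin n → X => ∑ i : Fin n, ∑ j ∈ Finset.univ \ {i}, W (x i) (x j)) Pn :=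
      integrable_finset_sum _ fun i _ => integrable_finset_sum _ fun j _ => hterm_int i j
    -- ∫ of each off-diagonal term equals D
    have hterm : ∀ i j : Fin n, i ≠ j →
        ∫ x, W (x i) (x j) ∂Pn = D := by
      intro i j hij
      have hσ2 : Function.Injective ![i, j] := by
        intro a b hab
        fin_cases a <;> fin_cases b <;>
          simp only [Matrix.cons_val_zero, Matrix.cons_val_one, Matrix.head_cons] at hab <;>
          first
            | rfl
            | exact absurd hab hij
            | exact absurd hab.symm hij
      have hmp := measurePreserving_comp_inj μ ![i, j] hσ2 (ι := Fin n) (κ := Fin 2)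
      have hgmeas : Measurable (fun y : Fin 2 → X => W (y 0) (y 1)) := hWm 0 1
      have h2 : ∫ y : Fin 2 → X, W (y 0) (y 1) ∂(Measure.pi fun _ => μ) = D := by
        have hmp2 := measurePreserving_finTwoArrow μ
        rw [hD, ← hmp2.integral_comp (MeasurableEquiv.measurableEmbedding _)
          (fun p : X × X => W p.1 p.2)]
        rfl
      have h3 := integral_map (μ := Pn) (φ := fun x : Fin n → X => x ∘ ![i, j])
        hmp.measurable.aemeasurable hgmeas.aestronglyMeasurable
      rw [hmp.map_eq] at h3
      rw [h2] at h3
      rw [h3]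
      refine integral_congr_ae (Filter.Eventually.of_forall fun x => ?_)
      simp [Matrix.cons_val_zero, Matrix.cons_val_one, Matrix.head_cons]
    -- combine
    have hsum_eq : ∫ x, (∑ i : Fin n, ∑ j ∈ Finset.univ \ {i}, W (x i) (x j)) ∂Pn
        = (n:ℝ) * ((n:ℝ) - 1) * D := by
      rw [integral_finset_sum _ fun i _ => integrable_finset_sum _ fun j _ => hterm_int i j]
      have : ∀ i : Fin n, ∫ x, (∑ j ∈ Finset.univ \ {i}, W (x i) (x j)) ∂Pn
          = ((n:ℝ) - 1) * D := by
        intro i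
        rw [integral_finset_sum _ fun j _ => hterm_int i j]
        have : ∀ j ∈ Finset.univ \ {i}, ∫ x, W (x i) (x j) ∂Pn = D := by
          intro j hj
          have hji : i ≠ j := fun h =>
            (Finset.mem_sdiff.1 hj).2 (Finset.mem_singleton.2 h.symm)
          exact hterm i j hji
        rw [Finset.sum_congr rfl this, Finset.sum_const, nsmul_eq_mul]
        congr 1
        rw [Finset.card_sdiff_of_subset (Finset.singleton_subset_iff.2 (Finset.mem_univ i)),
          Finset.card_singleton, Finset.card_univ, Fintype.card_fin]
        have h1n : 1 ≤ n := by omega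
        push_cast [h1n]
        ring
      rw [Finset.sum_congr rfl fun i _ => this i, Finset.sum_const, nsmul_eq_mul,
        Finset.card_univ, Fintype.card_fin]
      ring
    have hIle := integral_mono_ae hsum_int (integrable_const _) hae2
    rw [hsum_eq, integral_const] at hIle
    simpa using hIle
  -- take the limit n → ∞
  rw [hgoal_eq]
  set c : ℝ := 1 - 1/((k:ℝ)-1) with hc
  have hev : ∀ᶠ n : ℕ in atTop, D ≤ c * (1 + 1/((n:ℝ) - 1)) := by
    filter_upwards [Filter.eventually_ge_atTop 2] with n hn
    have hn1 : (1:ℝ) < (n:ℝ) := by exact_mod_cast Nat.lt_of_lt_of_le one_lt_two hn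
    have hnpos : (0:ℝ) < (n:ℝ) := lt_trans one_pos hn1
    have hn1pos : (0:ℝ) < (n:ℝ) - 1 := by linarith
    have h := key n hn
    have heq : c * (1 + 1/((n:ℝ) - 1)) = (c * (n:ℝ)^2) / ((n:ℝ) * ((n:ℝ) - 1)) := by
      field_simp
      ring
    rw [heq, le_div_iff₀ (by positivity)]
    linarith [h]
  have hlim : Tendsto (fun n : ℕ => c * (1 + 1/((n:ℝ) - 1))) atTop (nhds c) := by
    have h1' : Tendsto (fun n : ℕ => (n:ℝ) - 1) atTop atTop :=
      Filter.tendsto_atTop_add_const_right _ _ tendsto_natCast_atTop_atTop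
    have h2' : Tendsto (fun n : ℕ => 1/((n:ℝ) - 1)) atTop (nhds 0) := by
      simpa [one_div, Pi.inv_def] using h1'.inv_tendsto_atTop
    have h3' : Tendsto (fun n : ℕ => 1 + 1/((n:ℝ) - 1)) atTop (nhds 1) := by
      simpa using (tendsto_const_nhds (x := (1:ℝ))).add h2'
    simpa using (tendsto_const_nhds (x := c)).mul h3'
  exact ge_of_tendsto hlim hev
end

section
/- For d ≥ 5, the volume of the ball of radius 2/√3 in ℝ^d exceeds twice the volume of the unit ball: (2/√3)^d · ω_d > 2·ω_d. Moreover, any ball of radius 2/√3 in ℝ^d contains no three points with all pairwise distances greater than 2. -/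
open MeasureTheory

theorem stmt18 (d : ℕ) (hd : 5 ≤ d) :
    2 * volume (Metric.ball (0 : EuclideanSpace ℝ (Fin d)) 1) <
      ENNReal.ofReal ((2 / Real.sqrt 3) ^ d) *
        volume (Metric.ball (0 : EuclideanSpace ℝ (Fin d)) 1) ∧
    ∀ (c : EuclideanSpace ℝ (Fin d)) (p : Fin 3 → EuclideanSpace ℝ (Fin d)),
      (∀ i, p i ∈ Metric.closedBall c (2 / Real.sqrt 3)) →
      ∃ i j, i ≠ j ∧ dist (p i) (p j) ≤ 2 := by
  have hs3 : Real.sqrt 3 > 0 := Real.sqrt_pos.mpr (by norm_num)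
  have hs3sq : Real.sqrt 3 ^ 2 = 3 := Real.sq_sqrt (by norm_num)
  have hx1 : (1 : ℝ) < 2 / Real.sqrt 3 := by
    rw [lt_div_iff₀ hs3]
    nlinarith
  constructor
  · have hpos : volume (Metric.ball (0 : EuclideanSpace ℝ (Fin d)) 1) ≠ 0 :=
      (Metric.measure_ball_pos volume _ one_pos).ne'
    have hfin : volume (Metric.ball (0 : EuclideanSpace ℝ (Fin d)) 1) ≠ ⊤ :=
      measure_ball_lt_top.ne
    apply ENNReal.mul_lt_mul_left hpos hfin
    have h9 : Real.sqrt 3 ^ 5 = (Real.sqrt 3 ^ 2) ^ 2 * Real.sqrt 3 := by ring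
    rw [hs3sq] at h9
    have hlt : Real.sqrt 3 < 16 / 9 := by nlinarith [hs3sq, hs3]
    have h5 : (2 : ℝ) < (2 / Real.sqrt 3) ^ 5 := by
      rw [div_pow, lt_div_iff₀ (by positivity)]
      rw [h9]; nlinarith
    have hmono : (2 / Real.sqrt 3) ^ 5 ≤ (2 / Real.sqrt 3) ^ d :=
      pow_le_pow_right₀ hx1.le hd
    have : (2 : ℝ) < (2 / Real.sqrt 3) ^ d := lt_of_lt_of_le h5 hmono
    calc (2 : ENNReal) = ENNReal.ofReal 2 := by simp
      _ < ENNReal.ofReal ((2 / Real.sqrt 3) ^ d) :=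
        ENNReal.ofReal_lt_ofReal_iff_of_nonneg (by norm_num) |>.mpr this
  · intro c p hp
    by_contra h
    push_neg at h
    have h01 : 2 < dist (p 0) (p 1) := h 0 1 (by decide)
    have h02 : 2 < dist (p 0) (p 2) := h 0 2 (by decide)
    have h12 : 2 < dist (p 1) (p 2) := h 1 2 (by decide)
    set a := p 0 - c with ha
    set b := p 1 - c with hb
    set e := p 2 - c with he
    have hna : ‖a‖ ≤ 2 / Real.sqrt 3 := by
      have := hp 0; rw [Metric.mem_closedBall, dist_eq_norm] at this; exact this
    have hnb : ‖b‖ ≤ 2 / Real.sqrt 3 := by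
      have := hp 1; rw [Metric.mem_closedBall, dist_eq_norm] at this; exact this
    have hne : ‖e‖ ≤ 2 / Real.sqrt 3 := by
      have := hp 2; rw [Metric.mem_closedBall, dist_eq_norm] at this; exact this
    have hr2 : (2 / Real.sqrt 3) ^ 2 = 4 / 3 := by
      rw [div_pow, hs3sq]; norm_num
    have hasq : ‖a‖ ^ 2 ≤ 4 / 3 := by
      rw [← hr2]; exact pow_le_pow_left₀ (norm_nonneg _) hna 2
    have hbsq : ‖b‖ ^ 2 ≤ 4 / 3 := by
      rw [← hr2]; exact pow_le_pow_left₀ (norm_nonneg _) hnb 2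
    have hesq : ‖e‖ ^ 2 ≤ 4 / 3 := by
      rw [← hr2]; exact pow_le_pow_left₀ (norm_nonneg _) hne 2
    have hd01 : dist (p 0) (p 1) = ‖a - b‖ := by
      rw [dist_eq_norm, ha, hb]; congr 1; abel
    have hd02 : dist (p 0) (p 2) = ‖a - e‖ := by
      rw [dist_eq_norm, ha, he]; congr 1; abel
    have hd12 : dist (p 1) (p 2) = ‖b - e‖ := by
      rw [dist_eq_norm, hb, he]; congr 1; abel
    rw [hd01] at h01; rw [hd02] at h02; rw [hd12] at h12
    have hab : (2:ℝ) ^ 2 < ‖a - b‖ ^ 2 := pow_lt_pow_left₀ h01 (by norm_num) (by norm_num)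
    have hae : (2:ℝ) ^ 2 < ‖a - e‖ ^ 2 := pow_lt_pow_left₀ h02 (by norm_num) (by norm_num)
    have hbe : (2:ℝ) ^ 2 < ‖b - e‖ ^ 2 := pow_lt_pow_left₀ h12 (by norm_num) (by norm_num)
    norm_num at hab hae hbe
    have key : ‖a - b‖ ^ 2 + ‖a - e‖ ^ 2 + ‖b - e‖ ^ 2 + ‖a + b + e‖ ^ 2 =
        3 * (‖a‖ ^ 2 + ‖b‖ ^ 2 + ‖e‖ ^ 2) := by
      have e1 := @norm_sub_sq_real (EuclideanSpace ℝ (Fin d)) _ _ a b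
      have e2 := @norm_sub_sq_real (EuclideanSpace ℝ (Fin d)) _ _ a e
      have e3 := @norm_sub_sq_real (EuclideanSpace ℝ (Fin d)) _ _ b e
      have e4 := @norm_add_sq_real (EuclideanSpace ℝ (Fin d)) _ _ (a + b) e
      have e5 := @norm_add_sq_real (EuclideanSpace ℝ (Fin d)) _ _ a b
      have i1 : (inner ℝ (a + b) e : ℝ) = inner ℝ a e + inner ℝ b e := inner_add_left a b e
      linarith
    linarith [sq_nonneg ‖a + b + e‖]
end
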